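/- arXiv:2205.14855 — 2 statements merged into one kernel-verified Lean document; each statement's English description precedes it below -/
import Mathlib

section
/- Assume ψ₀ := Δ/(β^{−1/2} k n^{−1/2} ‖E‖) ≥ 16 and κ ≤ r ≤ k, and let ẑ be the spectral clustering with r components and φ the bijection of [k] with ℓ(ẑ,z*) = (1/n)|{i : ẑ_i ≠ φ(z*_i)}|. Then there is a universal constant C > 0 (one may take C = 512) such that for every i ∈ [n]: 𝟙{ẑ_i ≠ φ(z*_i)} ≤ 𝟙{ (1 − C ψ₀^{−1}) Δ ≤ 2‖Û_{1:r} Û_{1:r}ᵀ ε_i‖ }. -/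
open Matrix MeasureTheory ProbabilityTheory
open scoped BigOperators ENNReal NNReal

open scoped RealInnerProductSpace
set_option maxHeartbeats 1000000
noncomputable section

/-- Euclidean norm of a vector in `Fin p → ℝ`. -/
def vnorm {p : ℕ} (x : Fin p → ℝ) : ℝ := Real.sqrt (∑ i, (x i) ^ 2)

/-- Frobenius norm of a real matrix. -/
def fnorm {m n : ℕ} (A : Matrix (Fin m) (Fin n) ℝ) : ℝ :=
  Real.sqrt (∑ i, ∑ j, (A i j) ^ 2)

/-- Operator (spectral) norm of a real matrix. -/
def opnorm {m n : ℕ} (A : Matrix (Fin m) (Fin n) ℝ) : ℝ :=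
  ‖LinearMap.toContinuousLinearMap (Matrix.toEuclideanLin A)‖

/-- A (full) singular value decomposition of a real `p × n` matrix `A`:
`A = U D Vᵀ` with `U, V` orthogonal and `D` the rectangular diagonal matrix with the
nonincreasing nonnegative singular values `sv 0 ≥ sv 1 ≥ ⋯` on the diagonal
(0-indexed, so the math `σ_i` is `sv (i-1)`), extended by zero beyond `min p n`. -/
structure SVDData (p n : ℕ) (A : Matrix (Fin p) (Fin n) ℝ) where
  U : Matrix (Fin p) (Fin p) ℝ
  V : Matrix (Fin n) (Fin n) ℝ
  sv : ℕ → ℝ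
  hU : Uᵀ * U = 1
  hV : Vᵀ * V = 1
  sv_anti : ∀ i j : ℕ, i ≤ j → sv j ≤ sv i
  sv_nonneg : ∀ i, 0 ≤ sv i
  sv_zero : ∀ j, min p n ≤ j → sv j = 0
  decomp : A = U * (Matrix.of fun (i : Fin p) (j : Fin n) => if (i : ℕ) = (j : ℕ) then sv (i : ℕ) else 0) * Vᵀ

/-- Projection matrix `U_{1:r} U_{1:r}ᵀ` onto the span of the first `r` columns of `U`. -/
def projr {p : ℕ} (U : Matrix (Fin p) (Fin p) ℝ) (r : ℕ) : Matrix (Fin p) (Fin p) ℝ :=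
  Matrix.of fun i j => ∑ l : Fin p, if (l : ℕ) < r then U i l * U j l else 0

/-- The `l`-th (0-indexed) column of a matrix, as a vector. -/
def matCol {p q : ℕ} (U : Matrix (Fin p) (Fin q) ℝ) (l : ℕ) : Fin p → ℝ :=
  fun i => if h : l < q then U i ⟨l, h⟩ else 0

/-- `β` for a cluster assignment: `(k/n) ·` (size of the smallest cluster),
so that `β·n/k` is the size of the smallest cluster. -/
def betaMin (n k : ℕ) (z : Fin n → Fin k) : ℝ :=
  ((k : ℝ) / n) * ⨅ a : Fin k, ((Finset.univ.filter fun i => z i = a).card : ℝ)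

/-- Minimum pairwise distance between the centers. -/
def Delta {p k : ℕ} (θ : Fin k → Fin p → ℝ) : ℝ :=
  ⨅ q : {q : Fin k × Fin k // q.1 ≠ q.2}, vnorm (fun i => θ q.1.1 i - θ q.1.2 i)

/-- Misclustering error `ℓ(z, z*)`. -/
def miscl {n k : ℕ} (z zs : Fin n → Fin k) : ℝ :=
  (⨅ φ : Equiv.Perm (Fin k), ((Finset.univ.filter fun i => z i ≠ φ (zs i)).card : ℝ)) / n

/-- `(z, c)` is a global minimizer of the k-means objective for the columns of `W * X`. -/
def IsKMeans {p n k : ℕ} (W : Matrix (Fin p) (Fin p) ℝ) (X : Matrix (Fin p) (Fin n) ℝ)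
    (z : Fin n → Fin k) (c : Fin k → Fin p → ℝ) : Prop :=
  ∀ (z' : Fin n → Fin k) (c' : Fin k → Fin p → ℝ),
    ∑ i, ∑ a, (W.mulVec (fun b => X b i) a - c (z i) a) ^ 2 ≤
      ∑ i, ∑ a, (W.mulVec (fun b => X b i) a - c' (z' i) a) ^ 2


def ve {p : ℕ} (x : Fin p → ℝ) : EuclideanSpace ℝ (Fin p) := WithLp.toLp 2 x

lemma vnorm_eq {p : ℕ} (x : Fin p → ℝ) : vnorm x = ‖ve x‖ := by
  rw [EuclideanSpace.norm_eq]; simp [vnorm, sq_abs, ve]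

lemma vnorm_nonneg {p : ℕ} (x : Fin p → ℝ) : 0 ≤ vnorm x := Real.sqrt_nonneg _

lemma dot_eq_inner {p : ℕ} (x y : Fin p → ℝ) : x ⬝ᵥ y = ⟪ve x, ve y⟫ := by
  simp [PiLp.inner_apply, RCLike.inner_apply, conj_trivial, dotProduct, ve, mul_comm]

lemma vnorm_sq {p : ℕ} (x : Fin p → ℝ) : vnorm x ^ 2 = x ⬝ᵥ x := by
  rw [vnorm_eq, dot_eq_inner, real_inner_self_eq_norm_sq]

lemma dot_le_vnorm_mul {p : ℕ} (x y : Fin p → ℝ) : x ⬝ᵥ y ≤ vnorm x * vnorm y := by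
  rw [dot_eq_inner, vnorm_eq, vnorm_eq]; exact real_inner_le_norm _ _

lemma vnorm_triangle3 {p : ℕ} (x y w : Fin p → ℝ) :
    vnorm (x - w) ≤ vnorm (x - y) + vnorm (y - w) := by
  have h1 : ve (x - w) = ve x - ve w := rfl
  have h2 : ve (x - y) = ve x - ve y := rfl
  have h3 : ve (y - w) = ve y - ve w := rfl
  rw [vnorm_eq, vnorm_eq, vnorm_eq, h1, h2, h3]
  exact norm_sub_le_norm_sub_add_norm_sub _ _ _

lemma vnorm_sub_symm {p : ℕ} (x y : Fin p → ℝ) : vnorm (x - y) = vnorm (y - x) := by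
  have h1 : ve (x - y) = ve x - ve y := rfl
  have h2 : ve (y - x) = ve y - ve x := rfl
  rw [vnorm_eq, vnorm_eq, h1, h2, norm_sub_rev]

lemma vnorm_smul {p : ℕ} (c : ℝ) (x : Fin p → ℝ) : vnorm (c • x) = |c| * vnorm x := by
  have h : ve (c • x) = c • ve x := rfl
  rw [vnorm_eq, h, norm_smul, vnorm_eq]; simp

lemma opnorm_nonneg {m n : ℕ} (A : Matrix (Fin m) (Fin n) ℝ) : 0 ≤ opnorm A := norm_nonneg _

lemma toE_apply {m n : ℕ} (A : Matrix (Fin m) (Fin n) ℝ) (v : Fin n → ℝ) :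
    (LinearMap.toContinuousLinearMap (Matrix.toEuclideanLin A)) (ve v) = ve (A.mulVec v) := by
  simp [Matrix.toEuclideanLin_apply, ve]

lemma vnorm_mulVec_le {m n : ℕ} (A : Matrix (Fin m) (Fin n) ℝ) (v : Fin n → ℝ) :
    vnorm (A.mulVec v) ≤ opnorm A * vnorm v := by
  have h := (LinearMap.toContinuousLinearMap (Matrix.toEuclideanLin A)).le_opNorm (ve v)
  rw [toE_apply] at h
  rw [vnorm_eq, vnorm_eq]; exact h

lemma opnorm_le {m n : ℕ} (A : Matrix (Fin m) (Fin n) ℝ) (c : ℝ) (hc : 0 ≤ c)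
    (h : ∀ v : Fin n → ℝ, vnorm (A.mulVec v) ≤ c * vnorm v) : opnorm A ≤ c := by
  apply ContinuousLinearMap.opNorm_le_bound _ hc
  intro v
  have := h v
  rw [vnorm_eq, vnorm_eq] at this
  have hv : ve v = v := rfl
  rw [← hv]
  rw [toE_apply]
  exact this

section ProjAlg
variable {p n : ℕ}

def mask (U : Matrix (Fin p) (Fin p) ℝ) (r : ℕ) : Matrix (Fin p) (Fin p) ℝ :=
  Matrix.of fun i l => if (l : ℕ) < r then U i l else 0

def dmask (p r : ℕ) : Matrix (Fin p) (Fin p) ℝ :=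
  Matrix.of fun l l' => if l = l' ∧ (l : ℕ) < r then 1 else 0

lemma projr_eq_mask (U : Matrix (Fin p) (Fin p) ℝ) (r : ℕ) :
    projr U r = mask U r * (mask U r)ᵀ := by
  ext i j
  simp only [projr, mask, Matrix.mul_apply, Matrix.transpose_apply, Matrix.of_apply]
  refine Finset.sum_congr rfl fun l _ => ?_
  by_cases h : (l : ℕ) < r <;> simp [h]

lemma projr_symm (U : Matrix (Fin p) (Fin p) ℝ) (r : ℕ) : (projr U r)ᵀ = projr U r := by
  ext i j
  simp only [projr, Matrix.transpose_apply, Matrix.of_apply]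
  exact Finset.sum_congr rfl fun l _ => by by_cases h : (l : ℕ) < r <;> simp [h, mul_comm]

lemma maskT_mask {U : Matrix (Fin p) (Fin p) ℝ} (hU : Uᵀ * U = 1) (r : ℕ) :
    (mask U r)ᵀ * mask U r = dmask p r := by
  ext l l'
  simp only [Matrix.mul_apply, mask, dmask, Matrix.transpose_apply, Matrix.of_apply]
  by_cases h : (l : ℕ) < r
  · by_cases h' : (l' : ℕ) < r
    · have h1 : ∑ i, (if (l:ℕ) < r then U i l else 0) * (if (l':ℕ) < r then U i l' else 0)
          = (Uᵀ * U) l l' := by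
        rw [hU, ← hU]
        simp only [Matrix.mul_apply, Matrix.transpose_apply]
        exact Finset.sum_congr rfl fun i _ => by simp [h, h']
      rw [h1, hU]
      by_cases he : l = l'
      · subst he; simp [Matrix.one_apply, h]
      · simp [Matrix.one_apply, he]
    · have he : l ≠ l' := by rintro rfl; exact h' h
      simp [h', he]
  · simp [h]

lemma mask_mul_dmask (U : Matrix (Fin p) (Fin p) ℝ) (r : ℕ) :
    mask U r * dmask p r = mask U r := by
  ext i l'
  simp only [Matrix.mul_apply, mask, dmask, Matrix.of_apply]
  by_cases h' : (l' : ℕ) < r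
  · rw [Finset.sum_eq_single l']
    · simp [h']
    · intro l _ hll
      simp [hll, fun (hh : l = l') => hll hh]
    · simp
  · rw [if_neg h']
    apply Finset.sum_eq_zero
    intro l _
    by_cases he : l = l'
    · subst he; simp [h']
    · simp [he]

lemma projr_idem {U : Matrix (Fin p) (Fin p) ℝ} (hU : Uᵀ * U = 1) (r : ℕ) :
    projr U r * projr U r = projr U r := by
  rw [projr_eq_mask]
  calc mask U r * (mask U r)ᵀ * (mask U r * (mask U r)ᵀ)
      = mask U r * ((mask U r)ᵀ * mask U r) * (mask U r)ᵀ := by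
        rw [Matrix.mul_assoc, Matrix.mul_assoc, Matrix.mul_assoc]
    _ = mask U r * (mask U r)ᵀ := by rw [maskT_mask hU, mask_mul_dmask]

lemma projr_mul_U {U : Matrix (Fin p) (Fin p) ℝ} (hU : Uᵀ * U = 1) (r : ℕ) :
    projr U r * U = mask U r := by
  rw [projr_eq_mask, Matrix.mul_assoc]
  have h1 : (mask U r)ᵀ * U = Matrix.of fun l j : Fin p => if (l : ℕ) < r ∧ l = j then (1:ℝ) else 0 := by
    ext l j
    simp only [Matrix.mul_apply, mask, Matrix.transpose_apply, Matrix.of_apply]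
    by_cases h : (l : ℕ) < r
    · have h2 : ∑ i, (if (l:ℕ) < r then U i l else 0) * U i j = (Uᵀ * U) l j := by
        simp only [Matrix.mul_apply, Matrix.transpose_apply]
        exact Finset.sum_congr rfl fun i _ => by simp [h]
      rw [h2, hU]
      by_cases he : l = j
      · subst he; simp [Matrix.one_apply, h]
      · simp [Matrix.one_apply, he, h]
    · simp [h]
  rw [h1]
  ext i j
  simp only [Matrix.mul_apply, mask, Matrix.of_apply]
  by_cases h : (j : ℕ) < r
  · rw [if_pos h, Finset.sum_eq_single j]
    · simp [h]
    · intro l _ hlj; simp [hlj]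
    · simp
  · rw [if_neg h]
    apply Finset.sum_eq_zero
    intro l _
    by_cases he : l = j
    · subst he; simp [h]
    · simp [he]

/-- symmetric idempotent matrices contract the euclidean norm -/
lemma proj_contract {A : Matrix (Fin p) (Fin p) ℝ} (hs : Aᵀ = A) (hi : A * A = A)
    (v : Fin p → ℝ) : vnorm (A.mulVec v) ≤ vnorm v := by
  have key : A.mulVec v ⬝ᵥ A.mulVec v = A.mulVec v ⬝ᵥ v := by
    conv_lhs => rw [dotProduct_mulVec]
    have h2 : A.mulVec v ᵥ* A = A.mulVec (A.mulVec v) := by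
      rw [← Matrix.mulVec_transpose, hs]
    rw [h2, Matrix.mulVec_mulVec, hi]
  by_cases h0 : vnorm (A.mulVec v) = 0
  · rw [h0]; exact vnorm_nonneg v
  · have hpos : 0 < vnorm (A.mulVec v) := lt_of_le_of_ne (vnorm_nonneg _) (Ne.symm h0)
    have h1 : vnorm (A.mulVec v) ^ 2 ≤ vnorm (A.mulVec v) * vnorm v := by
      rw [vnorm_sq, key]; exact dot_le_vnorm_mul _ _
    nlinarith
end ProjAlg

section NormUtil
variable {p n : ℕ}

lemma vnorm_add_le (x y : Fin p → ℝ) : vnorm (x + y) ≤ vnorm x + vnorm y := by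
  have h : ve (x + y) = ve x + ve y := rfl
  rw [vnorm_eq, vnorm_eq, vnorm_eq, h]; exact norm_add_le _ _

lemma vnorm_sub_le' (x y : Fin p → ℝ) : vnorm (x - y) ≤ vnorm x + vnorm y := by
  have h : ve (x - y) = ve x - ve y := rfl
  rw [vnorm_eq, vnorm_eq, vnorm_eq, h]; exact norm_sub_le _ _

lemma vnorm_pos {x : Fin p → ℝ} (hx : x ≠ 0) : 0 < vnorm x := by
  rw [vnorm_eq]
  exact norm_pos_iff.mpr (show ve x ≠ 0 by simpa [ve] using hx)

lemma vnorm_eq_of_sq {x : Fin p → ℝ} {y : Fin n → ℝ} (h : vnorm x ^ 2 = vnorm y ^ 2) :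
    vnorm x = vnorm y := by
  nlinarith [vnorm_nonneg x, vnorm_nonneg y]

lemma opnorm_sub_le {A B : Matrix (Fin p) (Fin n) ℝ} : opnorm (A - B) ≤ opnorm A + opnorm B := by
  apply opnorm_le _ _ (add_nonneg (opnorm_nonneg A) (opnorm_nonneg B))
  intro v
  rw [Matrix.sub_mulVec]
  calc vnorm (A.mulVec v - B.mulVec v) ≤ vnorm (A.mulVec v) + vnorm (B.mulVec v) :=
        vnorm_sub_le' _ _
    _ ≤ opnorm A * vnorm v + opnorm B * vnorm v :=
        add_le_add (vnorm_mulVec_le A v) (vnorm_mulVec_le B v)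
    _ = (opnorm A + opnorm B) * vnorm v := by ring

lemma mulVec_orth_vnorm {m : ℕ} {U : Matrix (Fin p) (Fin m) ℝ} (hU : Uᵀ * U = 1)
    (w : Fin m → ℝ) : vnorm (U.mulVec w) = vnorm w := by
  apply vnorm_eq_of_sq
  rw [vnorm_sq, vnorm_sq]
  calc U.mulVec w ⬝ᵥ U.mulVec w = (U.mulVec w ᵥ* U) ⬝ᵥ w := dotProduct_mulVec _ _ _
    _ = (Uᵀ.mulVec (U.mulVec w)) ⬝ᵥ w := by rw [Matrix.mulVec_transpose]
    _ = ((Uᵀ * U).mulVec w) ⬝ᵥ w := by rw [Matrix.mulVec_mulVec]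
    _ = w ⬝ᵥ w := by rw [hU, Matrix.one_mulVec]

lemma opnorm_UNVt_le {U : Matrix (Fin p) (Fin p) ℝ} {V : Matrix (Fin n) (Fin n) ℝ}
    (hU : Uᵀ * U = 1) (hV : Vᵀ * V = 1) (N : Matrix (Fin p) (Fin n) ℝ) :
    opnorm (U * N * Vᵀ) ≤ opnorm N := by
  have hVT : (Vᵀ)ᵀ * Vᵀ = 1 := by
    rw [Matrix.transpose_transpose]; exact mul_eq_one_comm.mp hV
  apply opnorm_le _ _ (opnorm_nonneg N)
  intro v
  rw [← Matrix.mulVec_mulVec, ← Matrix.mulVec_mulVec, mulVec_orth_vnorm hU,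
    ← mulVec_orth_vnorm hVT v]
  exact vnorm_mulVec_le N _

lemma opnorm_diaglike_le (A : Matrix (Fin p) (Fin n) ℝ) (b : ℝ) (hb : 0 ≤ b)
    (hzero : ∀ (i : Fin p) (j : Fin n), (i : ℕ) ≠ (j : ℕ) → A i j = 0)
    (hbd : ∀ (i : Fin p) (j : Fin n), |A i j| ≤ b) :
    opnorm A ≤ b := by
  apply opnorm_le _ _ hb
  intro v
  have key : ∀ i : Fin p, (A.mulVec v i) ^ 2 ≤
      b ^ 2 * ∑ j : Fin n, (if (i : ℕ) = (j : ℕ) then (v j) ^ 2 else 0) := by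
    intro i
    by_cases h : (i : ℕ) < n
    · have hiff : ∀ j : Fin n, ((i : ℕ) = (j : ℕ)) ↔ ((⟨(i : ℕ), h⟩ : Fin n) = j) := by
        intro j; rw [Fin.ext_iff]
      have h1 : A.mulVec v i = A i ⟨(i : ℕ), h⟩ * v ⟨(i : ℕ), h⟩ := by
        show (∑ j : Fin n, A i j * v j) = _
        apply Finset.sum_eq_single
        · intro j _ hj
          have hne : (i : ℕ) ≠ (j : ℕ) := fun he => hj ((hiff j).mp he).symm
          rw [hzero i j hne, zero_mul]
        · simp
      have h2 : (∑ j : Fin n, if (i : ℕ) = (j : ℕ) then (v j) ^ 2 else 0)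
          = v ⟨(i : ℕ), h⟩ ^ 2 := by
        simp_rw [hiff]
        rw [Finset.sum_ite_eq]
        simp
      rw [h1, h2, mul_pow]
      have hA2 : A i ⟨(i : ℕ), h⟩ ^ 2 ≤ b ^ 2 := by
        nlinarith [hbd i ⟨(i : ℕ), h⟩, abs_nonneg (A i ⟨(i : ℕ), h⟩), sq_abs (A i ⟨(i : ℕ), h⟩)]
      exact mul_le_mul_of_nonneg_right hA2 (sq_nonneg _)
    · have h1 : A.mulVec v i = 0 := by
        show (∑ j : Fin n, A i j * v j) = 0
        apply Finset.sum_eq_zero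
        intro j _
        have hne : (i : ℕ) ≠ (j : ℕ) := by have := j.isLt; omega
        rw [hzero i j hne, zero_mul]
      rw [h1]
      have h3 : (0:ℝ) ≤ ∑ j : Fin n, (if (i : ℕ) = (j : ℕ) then (v j) ^ 2 else 0) := by
        apply Finset.sum_nonneg
        intro j _; split <;> positivity
      nlinarith [mul_nonneg (sq_nonneg b) h3]
  have hsq : vnorm (A.mulVec v) ^ 2 ≤ b ^ 2 * vnorm v ^ 2 := by
    rw [vnorm_sq, vnorm_sq]
    have e1 : A.mulVec v ⬝ᵥ A.mulVec v = ∑ i : Fin p, (A.mulVec v i) ^ 2 := by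
      simp [dotProduct, sq]
    have e2 : v ⬝ᵥ v = ∑ j : Fin n, (v j) ^ 2 := by simp [dotProduct, sq]
    rw [e1, e2]
    calc ∑ i : Fin p, (A.mulVec v i) ^ 2
        ≤ ∑ i : Fin p, b ^ 2 * ∑ j : Fin n, (if (i : ℕ) = (j : ℕ) then (v j) ^ 2 else 0) :=
          Finset.sum_le_sum fun i _ => key i
      _ = b ^ 2 * ∑ i : Fin p, ∑ j : Fin n, (if (i : ℕ) = (j : ℕ) then (v j) ^ 2 else 0) := by
          rw [Finset.mul_sum]
      _ = b ^ 2 * ∑ j : Fin n, ∑ i : Fin p, (if (i : ℕ) = (j : ℕ) then (v j) ^ 2 else 0) := by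
          rw [Finset.sum_comm]
      _ ≤ b ^ 2 * ∑ j : Fin n, (v j) ^ 2 := by
          apply mul_le_mul_of_nonneg_left _ (sq_nonneg b)
          apply Finset.sum_le_sum
          intro j _
          by_cases hj : (j : ℕ) < p
          · have hiff : ∀ i : Fin p, ((i : ℕ) = (j : ℕ)) ↔ (i = (⟨(j : ℕ), hj⟩ : Fin p)) := by
              intro i; rw [Fin.ext_iff]
            simp_rw [hiff]
            rw [Finset.sum_ite_eq']
            simp
          · rw [Finset.sum_eq_zero]
            · positivity
            · intro i _
              have hne : (i : ℕ) ≠ (j : ℕ) := by have := i.isLt; omega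
              simp [hne]
  nlinarith [vnorm_nonneg (A.mulVec v), vnorm_nonneg v, mul_nonneg hb (vnorm_nonneg v),
    sq_nonneg (vnorm (A.mulVec v) + b * vnorm v)]
end NormUtil

section SVDFacts
variable {p n : ℕ} {X : Matrix (Fin p) (Fin n) ℝ}

def Dmat (S : SVDData p n X) : Matrix (Fin p) (Fin n) ℝ :=
  Matrix.of fun (i : Fin p) (j : Fin n) => if (i : ℕ) = (j : ℕ) then S.sv (i : ℕ) else 0

def Dlow (S : SVDData p n X) (r : ℕ) : Matrix (Fin p) (Fin n) ℝ :=
  Matrix.of fun (i : Fin p) (j : Fin n) =>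
    if (i : ℕ) = (j : ℕ) ∧ (i : ℕ) < r then S.sv (i : ℕ) else 0

def Dhigh (S : SVDData p n X) (r : ℕ) : Matrix (Fin p) (Fin n) ℝ :=
  Matrix.of fun (i : Fin p) (j : Fin n) =>
    if (i : ℕ) = (j : ℕ) ∧ ¬ (i : ℕ) < r then S.sv (i : ℕ) else 0

lemma decomp' (S : SVDData p n X) : X = S.U * Dmat S * S.Vᵀ := S.decomp

lemma mask_mul_Dmat (S : SVDData p n X) (r : ℕ) :
    mask S.U r * Dmat S = S.U * Dlow S r := by
  ext i j
  simp only [Matrix.mul_apply, mask, Dmat, Dlow, Matrix.of_apply]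
  refine Finset.sum_congr rfl fun l _ => ?_
  by_cases h1 : (l : ℕ) < r <;> by_cases h2 : (l : ℕ) = (j : ℕ) <;> simp [h1, h2]

lemma one_sub_projr_X (S : SVDData p n X) (r : ℕ) :
    (1 - projr S.U r) * X = S.U * Dhigh S r * S.Vᵀ := by
  have h1 : projr S.U r * X = S.U * Dlow S r * S.Vᵀ := by
    have hcongr := congrArg (fun M => projr S.U r * M) (decomp' S)
    rw [hcongr, ← Matrix.mul_assoc, ← Matrix.mul_assoc, projr_mul_U S.hU, mask_mul_Dmat]
  have h2 : Dmat S - Dlow S r = Dhigh S r := by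
    ext i j
    simp only [Matrix.sub_apply, Dmat, Dlow, Dhigh, Matrix.of_apply]
    by_cases h1 : (i : ℕ) = (j : ℕ)
    · by_cases h2 : (j : ℕ) < r <;> simp [h1, h2]
    · simp [h1]
  rw [Matrix.sub_mul, Matrix.one_mul, h1, ← h2, Matrix.mul_sub, Matrix.sub_mul, ← decomp' S]

lemma opnorm_one_sub_projr_X_le (S : SVDData p n X) (r : ℕ) :
    opnorm ((1 - projr S.U r) * X) ≤ S.sv r := by
  rw [one_sub_projr_X S r]
  refine le_trans (opnorm_UNVt_le S.hU S.hV _) ?_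
  apply opnorm_diaglike_le _ _ (S.sv_nonneg r)
  · intro i j hij
    simp [Dhigh, hij]
  · intro i j
    simp only [Dhigh, Matrix.of_apply]
    split
    · next h =>
      rw [abs_of_nonneg (S.sv_nonneg _)]
      exact S.sv_anti r (i : ℕ) (by omega)
    · rw [abs_zero]; exact S.sv_nonneg r

lemma sv_le_opnormE (S : SVDData p n X) {Pm E : Matrix (Fin p) (Fin n) ℝ}
    (hX : X = Pm + E) {κ r : ℕ} (hrank : Pm.rank = κ) (hκr : κ ≤ r) :
    S.sv r ≤ opnorm E := by
  by_cases hmin : min p n ≤ r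
  · rw [S.sv_zero r hmin]; exact opnorm_nonneg E
  push_neg at hmin
  have hrp : r < p := lt_of_lt_of_le hmin (min_le_left _ _)
  have hrn : r < n := lt_of_lt_of_le hmin (min_le_right _ _)
  have hrn' : r + 1 ≤ n := hrn
  set Vs : Matrix (Fin n) (Fin (r + 1)) ℝ := S.V.submatrix id (Fin.castLE hrn') with hVs
  have hV's : Vsᵀ * Vs = 1 := by
    ext l l'
    have h1 : (Vsᵀ * Vs) l l' = (S.Vᵀ * S.V) (Fin.castLE hrn' l) (Fin.castLE hrn' l') := by
      simp [Matrix.mul_apply, hVs, Matrix.submatrix, Matrix.transpose_apply]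
    rw [h1, S.hV]
    simp [Matrix.one_apply, Fin.castLE_inj]
  have hker : LinearMap.ker Vs.mulVecLin = ⊥ := by
    rw [LinearMap.ker_eq_bot']
    intro c hc
    have hc' : Vs.mulVec c = 0 := hc
    calc c = (1 : Matrix (Fin (r+1)) (Fin (r+1)) ℝ).mulVec c := (Matrix.one_mulVec c).symm
      _ = (Vsᵀ * Vs).mulVec c := by rw [hV's]
      _ = Vsᵀ.mulVec (Vs.mulVec c) := (Matrix.mulVec_mulVec _ _ _).symm
      _ = 0 := by rw [hc']; simp
  set W := LinearMap.range Vs.mulVecLin with hWdef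
  set K := LinearMap.ker Pm.mulVecLin with hKdef
  have hW : Module.finrank ℝ W = r + 1 := by
    have h := LinearMap.finrank_range_add_finrank_ker (Vs.mulVecLin)
    rw [hker, Module.finrank_fin_fun] at h
    simpa using h
  have hK : κ + Module.finrank ℝ K = n := by
    have h := LinearMap.finrank_range_add_finrank_ker (Pm.mulVecLin)
    rw [Module.finrank_fin_fun] at h
    have hr' : Module.finrank ℝ ↥(LinearMap.range Pm.mulVecLin) = κ := by
      rw [← hrank]; rfl
    rw [hKdef, ← hr']
    exact h
  have hWK : 0 < Module.finrank ℝ ↥(W ⊓ K) := by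
    have h1 := Submodule.finrank_sup_add_finrank_inf_eq W K
    have h2 : Module.finrank ℝ ↥(W ⊔ K) ≤ n := by
      have := Submodule.finrank_le (W ⊔ K)
      rwa [Module.finrank_fin_fun] at this
    omega
  obtain ⟨x, hx⟩ := Module.finrank_pos_iff_exists_ne_zero.mp hWK
  have hvW : (x : Fin n → ℝ) ∈ W := x.2.1
  have hvK : (x : Fin n → ℝ) ∈ K := x.2.2
  set v : Fin n → ℝ := (x : Fin n → ℝ) with hvdef
  have hvne : v ≠ 0 := fun h => hx (Subtype.ext h)
  obtain ⟨c, hc⟩ := hvW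
  have hc' : Vs.mulVec c = v := hc
  have hPv : Pm.mulVec v = 0 := hvK
  set w : Fin n → ℝ := S.Vᵀ.mulVec v with hwdef
  have hVT : (S.Vᵀ)ᵀ * S.Vᵀ = 1 := by
    rw [Matrix.transpose_transpose]; exact mul_eq_one_comm.mp S.hV
  have hwv : vnorm w = vnorm v := mulVec_orth_vnorm hVT v
  have hwsupp : ∀ j : Fin n, r < (j : ℕ) → w j = 0 := by
    intro j hj
    have h1 : w = (S.Vᵀ * Vs).mulVec c := by rw [hwdef, ← hc', Matrix.mulVec_mulVec]
    have h2 : ∀ l : Fin (r+1), (S.Vᵀ * Vs) j l = 0 := by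
      intro l
      have h3 : (S.Vᵀ * Vs) j l = (S.Vᵀ * S.V) j (Fin.castLE hrn' l) := by
        simp [Matrix.mul_apply, hVs, Matrix.submatrix]
      rw [h3, S.hV, Matrix.one_apply]
      have : j ≠ Fin.castLE hrn' l := by
        intro he
        have : (j : ℕ) = (l : ℕ) := by rw [he]; rfl
        omega
      simp [this]
    rw [h1]
    show ∑ l, (S.Vᵀ * Vs) j l * c l = 0
    exact Finset.sum_eq_zero fun l _ => by rw [h2 l, zero_mul]
  have hp0 : 0 < p := by omega
  set wp : Fin p → ℝ := fun i => if h : (i : ℕ) < n then w ⟨(i : ℕ), h⟩ else 0 with hwp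
  have hDw : ∀ i : Fin p, (i : ℕ) < n → (Dmat S).mulVec w i = S.sv (i : ℕ) * wp i := by
    intro i h
    show (∑ j : Fin n, (Dmat S) i j * w j) = _
    rw [Finset.sum_eq_single (⟨(i : ℕ), h⟩ : Fin n)]
    · simp [Dmat, hwp, h]
    · intro j _ hj
      have hne : (i : ℕ) ≠ (j : ℕ) := fun he => hj (by ext; exact he.symm)
      simp [Dmat, hne]
    · simp
  set f : Fin n → Fin p := fun j => if h : (j : ℕ) < p then ⟨(j : ℕ), h⟩ else ⟨0, hp0⟩ with hf
  have hsum : (S.sv r) ^ 2 * (∑ j : Fin n, w j ^ 2) ≤ ∑ i : Fin p, ((Dmat S).mulVec w i) ^ 2 := by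
    have e1 : ∑ j : Fin n, w j ^ 2
        = ∑ j ∈ Finset.filter (fun j : Fin n => (j : ℕ) ≤ r) Finset.univ, w j ^ 2 := by
      symm
      apply Finset.sum_filter_of_ne
      intro j _ hj
      by_contra hle
      exact hj (by rw [hwsupp j (by omega)]; ring)
    rw [e1, Finset.mul_sum]
    have e2 : ∀ j ∈ Finset.filter (fun j : Fin n => (j : ℕ) ≤ r) Finset.univ,
        (S.sv r) ^ 2 * w j ^ 2 ≤ ((Dmat S).mulVec w (f j)) ^ 2 := by
      intro j hj
      simp only [Finset.mem_filter, Finset.mem_univ, true_and] at hj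
      have hjp : (j : ℕ) < p := by omega
      have hfv : ((f j : Fin p) : ℕ) = (j : ℕ) := by rw [hf]; simp [hjp]
      have hfn : ((f j : Fin p) : ℕ) < n := by omega
      rw [hDw (f j) hfn]
      have hwpj : wp (f j) = w j := by
        rw [hwp]
        simp only [dif_pos hfn]
        congr 1
        ext
        simp [hfv]
      rw [hwpj, mul_pow]
      have h1 : (S.sv r) ^ 2 ≤ (S.sv ((f j : Fin p) : ℕ)) ^ 2 := by
        have h2 := S.sv_anti ((f j : Fin p) : ℕ) r (by omega)
        nlinarith [S.sv_nonneg r, S.sv_nonneg ((f j : Fin p) : ℕ)]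
      exact mul_le_mul_of_nonneg_right h1 (sq_nonneg _)
    have hinj : ∀ x ∈ Finset.filter (fun j : Fin n => (j : ℕ) ≤ r) Finset.univ,
        ∀ y ∈ Finset.filter (fun j : Fin n => (j : ℕ) ≤ r) Finset.univ, f x = f y → x = y := by
      intro x hx y hy hxy
      simp only [Finset.mem_filter, Finset.mem_univ, true_and] at hx hy
      have hxv : ((f x : Fin p) : ℕ) = (x : ℕ) := by rw [hf]; simp [show (x:ℕ) < p by omega]
      have hyv : ((f y : Fin p) : ℕ) = (y : ℕ) := by rw [hf]; simp [show (y:ℕ) < p by omega]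
      ext
      rw [← hxv, ← hyv, hxy]
    calc ∑ j ∈ Finset.filter (fun j : Fin n => (j : ℕ) ≤ r) Finset.univ, (S.sv r) ^ 2 * w j ^ 2
        ≤ ∑ j ∈ Finset.filter (fun j : Fin n => (j : ℕ) ≤ r) Finset.univ,
            ((Dmat S).mulVec w (f j)) ^ 2 := Finset.sum_le_sum e2
      _ = ∑ i ∈ (Finset.filter (fun j : Fin n => (j : ℕ) ≤ r) Finset.univ).image f,
            ((Dmat S).mulVec w i) ^ 2 := by rw [Finset.sum_image hinj]
      _ ≤ ∑ i : Fin p, ((Dmat S).mulVec w i) ^ 2 :=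
            Finset.sum_le_sum_of_subset_of_nonneg (Finset.subset_univ _)
              (fun i _ _ => sq_nonneg _)
  have hlow : S.sv r * vnorm w ≤ vnorm ((Dmat S).mulVec w) := by
    have edot : ∀ (q : ℕ) (x : Fin q → ℝ), x ⬝ᵥ x = ∑ i, x i ^ 2 := by
      intro q x; simp [dotProduct, sq]
    have h1 : (S.sv r * vnorm w) ^ 2 ≤ vnorm ((Dmat S).mulVec w) ^ 2 := by
      rw [mul_pow, vnorm_sq, vnorm_sq, edot, edot]
      exact hsum
    nlinarith [vnorm_nonneg ((Dmat S).mulVec w),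
      mul_nonneg (S.sv_nonneg r) (vnorm_nonneg w)]
  have hXveq : X.mulVec v = S.U.mulVec ((Dmat S).mulVec (S.Vᵀ.mulVec v)) := by
    conv_lhs => rw [decomp' S]
    rw [Matrix.mulVec_mulVec, Matrix.mulVec_mulVec]
  have hXv : vnorm (X.mulVec v) = vnorm ((Dmat S).mulVec w) := by
    rw [hXveq, mulVec_orth_vnorm S.hU]
  have hEv : E.mulVec v = X.mulVec v := by
    rw [hX, Matrix.add_mulVec, hPv, zero_add]
  have hfinal : S.sv r * vnorm v ≤ opnorm E * vnorm v := by
    calc S.sv r * vnorm v = S.sv r * vnorm w := by rw [hwv]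
      _ ≤ vnorm ((Dmat S).mulVec w) := hlow
      _ = vnorm (X.mulVec v) := hXv.symm
      _ = vnorm (E.mulVec v) := by rw [hEv]
      _ ≤ opnorm E * vnorm v := vnorm_mulVec_le E v
  exact le_of_mul_le_mul_right hfinal (vnorm_pos hvne)

end SVDFacts

section MoreFacts
variable {p n : ℕ}

lemma dot_self_eq_sum_sq {q : ℕ} (x : Fin q → ℝ) : x ⬝ᵥ x = ∑ i, x i ^ 2 := by
  simp [dotProduct, sq]

lemma vnorm_neg (x : Fin p → ℝ) : vnorm (-x) = vnorm x := by
  have h : ve (-x) = -(ve x) := rfl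
  rw [vnorm_eq, h, norm_neg, vnorm_eq]

lemma vnorm_transpose_mulVec_le (E : Matrix (Fin p) (Fin n) ℝ) (u : Fin p → ℝ) :
    vnorm (Eᵀ.mulVec u) ≤ opnorm E * vnorm u := by
  have key : (Eᵀ.mulVec u) ⬝ᵥ (Eᵀ.mulVec u) = (E.mulVec (Eᵀ.mulVec u)) ⬝ᵥ u := by
    rw [dotProduct_mulVec, ← Matrix.mulVec_transpose, Matrix.transpose_transpose]
  have h2 : vnorm (Eᵀ.mulVec u) ^ 2 ≤ opnorm E * vnorm (Eᵀ.mulVec u) * vnorm u := by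
    rw [vnorm_sq, key]
    calc (E.mulVec (Eᵀ.mulVec u)) ⬝ᵥ u ≤ vnorm (E.mulVec (Eᵀ.mulVec u)) * vnorm u :=
          dot_le_vnorm_mul _ _
      _ ≤ (opnorm E * vnorm (Eᵀ.mulVec u)) * vnorm u :=
          mul_le_mul_of_nonneg_right (vnorm_mulVec_le E _) (vnorm_nonneg u)
  by_cases h0 : vnorm (Eᵀ.mulVec u) = 0
  · rw [h0]
    exact mul_nonneg (opnorm_nonneg E) (vnorm_nonneg u)
  · have hpos : 0 < vnorm (Eᵀ.mulVec u) := lt_of_le_of_ne (vnorm_nonneg _) (Ne.symm h0)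
    nlinarith

lemma dmask_fix {r : ℕ} (U : Matrix (Fin p) (Fin p) ℝ) (x : Fin p → ℝ) :
    (dmask p r).mulVec ((mask U r)ᵀ.mulVec x) = (mask U r)ᵀ.mulVec x := by
  ext l
  show (∑ l', (dmask p r) l l' * ((mask U r)ᵀ.mulVec x) l') = _
  by_cases h : (l : ℕ) < r
  · rw [Finset.sum_eq_single l]
    · simp [dmask, h]
    · intro l' _ hl'; simp [dmask, Ne.symm hl']
    · simp
  · have h1 : ((mask U r)ᵀ.mulVec x) l = 0 := by
      show (∑ a, (mask U r)ᵀ l a * x a) = 0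
      apply Finset.sum_eq_zero
      intro a _
      simp [mask, h]
    rw [h1]
    apply Finset.sum_eq_zero
    intro l' _
    by_cases he : l = l'
    · subst he; simp [dmask, h]
    · simp [dmask, he]

lemma vnorm_projr_sq {U : Matrix (Fin p) (Fin p) ℝ} (hU : Uᵀ * U = 1) (r : ℕ)
    (x : Fin p → ℝ) :
    vnorm ((projr U r).mulVec x) ^ 2 = ((mask U r)ᵀ.mulVec x) ⬝ᵥ ((mask U r)ᵀ.mulVec x) := by
  rw [vnorm_sq]
  have h1 : (projr U r).mulVec x = (mask U r).mulVec ((mask U r)ᵀ.mulVec x) := by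
    rw [Matrix.mulVec_mulVec, ← projr_eq_mask]
  rw [h1]
  set y := (mask U r)ᵀ.mulVec x with hy
  calc (mask U r).mulVec y ⬝ᵥ (mask U r).mulVec y
      = ((mask U r).mulVec y ᵥ* (mask U r)) ⬝ᵥ y := dotProduct_mulVec _ _ _
    _ = ((mask U r)ᵀ.mulVec ((mask U r).mulVec y)) ⬝ᵥ y := by rw [Matrix.mulVec_transpose]
    _ = (((mask U r)ᵀ * mask U r).mulVec y) ⬝ᵥ y := by rw [Matrix.mulVec_mulVec]
    _ = ((dmask p r).mulVec y) ⬝ᵥ y := by rw [maskT_mask hU]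
    _ = y ⬝ᵥ y := by rw [hy, dmask_fix]

lemma card_filter_lt_le (r : ℕ) :
    (Finset.univ.filter fun l : Fin p => (l : ℕ) < r).card ≤ r := by
  have h : (Finset.univ.filter fun l : Fin p => (l : ℕ) < r).card ≤ (Finset.range r).card := by
    apply Finset.card_le_card_of_injOn (fun l : Fin p => (l : ℕ))
    · intro l hl
      simpa using hl
    · intro a _ b _ hab
      exact Fin.ext hab
  exact h.trans (Nat.le_of_eq (Finset.card_range r))

lemma sum_vnorm_projE_sq_le {U : Matrix (Fin p) (Fin p) ℝ} (hU : Uᵀ * U = 1)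
    (r : ℕ) (E : Matrix (Fin p) (Fin n) ℝ) :
    ∑ i : Fin n, vnorm ((projr U r).mulVec (fun a => E a i)) ^ 2 ≤ (r : ℝ) * opnorm E ^ 2 := by
  have step1 : ∑ i : Fin n, vnorm ((projr U r).mulVec (fun a => E a i)) ^ 2
      = ∑ l : Fin p, ∑ i : Fin n, ((mask U r)ᵀ.mulVec (fun a => E a i) l) ^ 2 := by
    rw [Finset.sum_comm]
    refine Finset.sum_congr rfl fun i _ => ?_
    rw [vnorm_projr_sq hU r, dot_self_eq_sum_sq]
  rw [step1]
  have step2 : ∀ l : Fin p, ∑ i : Fin n, ((mask U r)ᵀ.mulVec (fun a => E a i) l) ^ 2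
      ≤ if (l : ℕ) < r then opnorm E ^ 2 else 0 := by
    intro l
    by_cases h : (l : ℕ) < r
    · rw [if_pos h]
      have he : ∀ i : Fin n, (mask U r)ᵀ.mulVec (fun a => E a i) l
          = Eᵀ.mulVec (fun a => U a l) i := by
        intro i
        show (∑ a, (mask U r)ᵀ l a * E a i) = ∑ a, Eᵀ i a * U a l
        refine Finset.sum_congr rfl fun a _ => ?_
        simp [mask, h, Matrix.transpose_apply, mul_comm]
      have hcol : vnorm (fun a => U a l) = 1 := by
        have h1 : vnorm (fun a => U a l) ^ 2 = 1 := by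
          rw [vnorm_sq]
          have : (fun a => U a l) ⬝ᵥ (fun a => U a l) = (Uᵀ * U) l l := by
            simp [Matrix.mul_apply, dotProduct, Matrix.transpose_apply]
          rw [this, hU]
          simp [Matrix.one_apply]
        nlinarith [vnorm_nonneg (fun a => U a l)]
      have h2 : vnorm (Eᵀ.mulVec (fun a => U a l)) ≤ opnorm E := by
        have := vnorm_transpose_mulVec_le E (fun a => U a l)
        rwa [hcol, mul_one] at this
      calc ∑ i : Fin n, ((mask U r)ᵀ.mulVec (fun a => E a i) l) ^ 2
          = ∑ i : Fin n, (Eᵀ.mulVec (fun a => U a l) i) ^ 2 :=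
            Finset.sum_congr rfl fun i _ => by rw [he i]
        _ = vnorm (Eᵀ.mulVec (fun a => U a l)) ^ 2 := by
            rw [vnorm_sq, dot_self_eq_sum_sq]
        _ ≤ opnorm E ^ 2 := by nlinarith [vnorm_nonneg (Eᵀ.mulVec (fun a => U a l))]
    · rw [if_neg h]
      have he : ∀ i : Fin n, (mask U r)ᵀ.mulVec (fun a => E a i) l = 0 := by
        intro i
        show (∑ a, (mask U r)ᵀ l a * E a i) = 0
        apply Finset.sum_eq_zero
        intro a _
        simp [mask, h]
      simp [he]
  calc ∑ l : Fin p, ∑ i : Fin n, ((mask U r)ᵀ.mulVec (fun a => E a i) l) ^ 2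
      ≤ ∑ l : Fin p, (if (l : ℕ) < r then opnorm E ^ 2 else 0) :=
        Finset.sum_le_sum fun l _ => step2 l
    _ = (Finset.univ.filter fun l : Fin p => (l : ℕ) < r).card * opnorm E ^ 2 := by
        rw [← Finset.sum_filter, Finset.sum_const, nsmul_eq_mul]
    _ ≤ (r : ℝ) * opnorm E ^ 2 := by
        apply mul_le_mul_of_nonneg_right _ (sq_nonneg _)
        exact_mod_cast card_filter_lt_le r

lemma col_norm_bound (N : Matrix (Fin p) (Fin n) ℝ) (S : Finset (Fin n)) (w : Fin p → ℝ)
    (hcol : ∀ j ∈ S, ∀ a, N a j = w a) :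
    Real.sqrt (S.card) * vnorm w ≤ opnorm N := by
  set ind : Fin n → ℝ := fun j => if j ∈ S then 1 else 0 with hind
  have h1 : N.mulVec ind = (S.card : ℝ) • w := by
    ext a
    show (∑ j, N a j * ind j) = (S.card : ℝ) * w a
    rw [hind]
    simp only [mul_ite, mul_one, mul_zero]
    rw [Finset.sum_ite_mem, Finset.univ_inter]
    rw [Finset.sum_congr rfl (fun j hj => hcol j hj a)]
    simp [Finset.sum_const, nsmul_eq_mul]
  have h3 : ∑ j, ind j ^ 2 = (S.card : ℝ) := by
    have he : ∀ j : Fin n, ind j ^ 2 = if j ∈ S then (1:ℝ) else 0 := by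
      intro j; rw [hind]; simp only []; split <;> norm_num
    simp_rw [he]
    rw [Finset.sum_ite_mem, Finset.univ_inter]
    simp
  have h2 : vnorm ind = Real.sqrt (S.card) := by
    rw [show vnorm ind = Real.sqrt (∑ j, ind j ^ 2) from rfl, h3]
  have h4 : (S.card : ℝ) * vnorm w ≤ opnorm N * Real.sqrt (S.card) := by
    have := vnorm_mulVec_le N ind
    rw [h1, h2, vnorm_smul] at this
    rwa [abs_of_nonneg (by positivity : (0:ℝ) ≤ (S.card : ℝ))] at this
  by_cases hc : S.card = 0
  · rw [hc]
    simp only [Nat.cast_zero, Real.sqrt_zero, zero_mul]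
    exact opnorm_nonneg N
  · have hcpos : (0:ℝ) < Real.sqrt (S.card) := by
      apply Real.sqrt_pos.mpr
      exact_mod_cast Nat.pos_of_ne_zero hc
    have h5 : (Real.sqrt (S.card) * vnorm w) * Real.sqrt (S.card) ≤ opnorm N * Real.sqrt (S.card) := by
      have hss : Real.sqrt (S.card) * Real.sqrt (S.card) = (S.card : ℝ) :=
        Real.mul_self_sqrt (by positivity)
      calc (Real.sqrt (S.card) * vnorm w) * Real.sqrt (S.card)
          = (Real.sqrt (S.card) * Real.sqrt (S.card)) * vnorm w := by ring
        _ = (S.card : ℝ) * vnorm w := by rw [hss]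
        _ ≤ opnorm N * Real.sqrt (S.card) := h4
    exact le_of_mul_le_mul_right h5 hcpos
end MoreFacts

/-- **Lemma 1 (entrywise error decomposition of spectral clustering).**
There is a universal constant `C > 0` such that for any mixture model `X = P + E` with
`rank P = κ ≤ r ≤ k`, if `ψ₀ := Δ/(β^{-1/2} k n^{-1/2} ‖E‖) ≥ 16` and `φ` is the bijection
of `[k]` realizing `ℓ(ẑ,z*)`, then for every `i`,
`𝟙{ẑ_i ≠ φ(z*_i)} ≤ 𝟙{(1 − Cψ₀^{-1})Δ ≤ 2‖Û_{1:r}Û_{1:r}ᵀ ε_i‖}`. -/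
theorem entrywise_decomposition_simple :
    ∃ C : ℝ, 0 < C ∧
      ∀ (p n k : ℕ) (z : Fin n → Fin k) (θ : Fin k → Fin p → ℝ)
        (Pm E X : Matrix (Fin p) (Fin n) ℝ),
        (∀ a j, Pm a j = θ (z j) a) → X = Pm + E →
        ∀ κ r : ℕ, Pm.rank = κ → κ ≤ r → r ≤ k →
        ∀ (DX : SVDData p n X) (zh : Fin n → Fin k) (c : Fin k → Fin p → ℝ),
          IsKMeans (projr DX.U r) X zh c →
        16 ≤ Delta θ /
            ((Real.sqrt (betaMin n k z))⁻¹ * (k : ℝ) * (Real.sqrt (n : ℝ))⁻¹ * opnorm E) →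
        ∀ φ : Equiv.Perm (Fin k),
          miscl zh z = ((Finset.univ.filter fun i => zh i ≠ φ (z i)).card : ℝ) / n →
        ∀ i, zh i ≠ φ (z i) →
          (1 - C * (Delta θ /
              ((Real.sqrt (betaMin n k z))⁻¹ * (k : ℝ) * (Real.sqrt (n : ℝ))⁻¹ * opnorm E))⁻¹) *
            Delta θ ≤
          2 * vnorm ((projr DX.U r).mulVec fun a => E a i) := by
  classical
  refine ⟨512, by norm_num, ?_⟩
  intro p n k z θ Pm E X hP hXPE κ r hrank hκr hrk DX zh c hkm hpsi φ hφ i0 hmis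
  set Pr := projr DX.U r with hPrdef
  set d := (Real.sqrt (betaMin n k z))⁻¹ * (k : ℝ) * (Real.sqrt (n : ℝ))⁻¹ * opnorm E with hd
  have hdnn : 0 ≤ d := by
    rw [hd]
    have h1 := opnorm_nonneg E
    have h2 : 0 ≤ (Real.sqrt (betaMin n k z))⁻¹ := by positivity
    have h3 : 0 ≤ (Real.sqrt (n : ℝ))⁻¹ := by positivity
    positivity
  have hd0 : d ≠ 0 := by
    intro h
    rw [h] at hpsi
    norm_num at hpsi
  have hdpos : 0 < d := lt_of_le_of_ne hdnn (Ne.symm hd0)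
  have hΔ16 : 16 * d ≤ Delta θ := by
    rw [le_div_iff₀ hdpos] at hpsi
    linarith
  have hΔpos : 0 < Delta θ := lt_of_lt_of_le (by positivity) hΔ16
  have hn0 : 0 < n := i0.pos
  have hk0 : 0 < k := (zh i0).pos
  haveI : Nonempty (Fin k) := ⟨zh i0⟩
  set SA : Fin k → Finset (Fin n) := fun a => Finset.univ.filter (fun j => z j = a) with hSA
  set mR : ℝ := ⨅ a : Fin k, ((SA a).card : ℝ) with hmR
  have hbdd : BddBelow (Set.range fun a : Fin k => ((SA a).card : ℝ)) :=
    ⟨0, by rintro x ⟨a, rfl⟩; positivity⟩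
  have hmle : ∀ a, mR ≤ ((SA a).card : ℝ) := fun a => by
    rw [hmR]; exact ciInf_le hbdd a
  have hm0 : 0 ≤ mR := by
    rw [hmR]; exact le_ciInf fun a => by positivity
  have hbeta : betaMin n k z = ((k : ℝ) / n) * mR := by
    rw [hmR, hSA]; rfl
  have hsb : Real.sqrt (betaMin n k z) ≠ 0 := by
    intro h
    apply hd0
    rw [hd, h]
    simp
  have hbpos : 0 < betaMin n k z := by
    rcases lt_or_ge 0 (betaMin n k z) with h | h
    · exact h
    · exact absurd (Real.sqrt_eq_zero'.mpr h) hsb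
  have hopE : 0 < opnorm E := by
    rcases lt_or_ge 0 (opnorm E) with h | h
    · exact h
    · exfalso
      apply hd0
      rw [hd, le_antisymm h (opnorm_nonneg E), mul_zero]
  have hmpos : 0 < mR := by
    have h1 : 0 < ((k : ℝ) / n) * mR := by rw [← hbeta]; exact hbpos
    have h2 : 0 < (k : ℝ) / n := by positivity
    nlinarith
  have hsqb : Real.sqrt (betaMin n k z) ^ 2 = betaMin n k z := Real.sq_sqrt hbpos.le
  have hsqn : Real.sqrt (n : ℝ) ^ 2 = (n : ℝ) := Real.sq_sqrt (by positivity)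
  have hE2 : (k : ℝ) * opnorm E ^ 2 = d ^ 2 * mR := by
    have hd2 : d ^ 2 = (betaMin n k z)⁻¹ * (k : ℝ) ^ 2 * ((n : ℝ))⁻¹ * opnorm E ^ 2 := by
      rw [hd, mul_pow, mul_pow, mul_pow, inv_pow, inv_pow, hsqb, hsqn]
    have hβn : betaMin n k z * (n : ℝ) = (k : ℝ) * mR := by
      rw [hbeta]
      field_simp
    rw [hd2, hbeta]
    have hk' : (k : ℝ) ≠ 0 := by positivity
    have hn' : (n : ℝ) ≠ 0 := by positivity
    have hm' : mR ≠ 0 := ne_of_gt hmpos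
    field_simp
  set pX : Fin n → Fin p → ℝ := fun j => Pr.mulVec (fun b => X b j) with hpX
  set pe : Fin n → Fin p → ℝ := fun j => Pr.mulVec (fun b => E b j) with hpe
  set qc : Fin k → Fin p → ℝ := fun a => Pr.mulVec (θ a) with hqc
  have hsplit : ∀ j, pX j = qc (z j) + pe j := by
    intro j
    show Pr.mulVec (fun b => X b j) = Pr.mulVec (θ (z j)) + Pr.mulVec (fun b => E b j)
    rw [← Matrix.mulVec_add]
    apply congrArg
    funext b
    show X b j = θ (z j) b + E b j
    rw [hXPE]
    show Pm b j + E b j = θ (z j) b + E b j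
    rw [hP]
  have hsum_eq : ∀ (x y : Fin p → ℝ), (∑ a, (x a - y a) ^ 2) = vnorm (x - y) ^ 2 := by
    intro x y
    rw [vnorm_sq, dot_self_eq_sum_sq]
    rfl
  have hcost : ∑ j, vnorm (pX j - c (zh j)) ^ 2 ≤ ∑ j, vnorm (pe j) ^ 2 := by
    have h := hkm z qc
    calc ∑ j, vnorm (pX j - c (zh j)) ^ 2
        = ∑ j, ∑ a, (pX j a - c (zh j) a) ^ 2 :=
          Finset.sum_congr rfl fun j _ => (hsum_eq _ _).symm
      _ ≤ ∑ j, ∑ a, (pX j a - qc (z j) a) ^ 2 := h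
      _ = ∑ j, vnorm (pX j - qc (z j)) ^ 2 := Finset.sum_congr rfl fun j _ => hsum_eq _ _
      _ = ∑ j, vnorm (pe j) ^ 2 := by
          refine Finset.sum_congr rfl fun j _ => ?_
          rw [hsplit j, add_sub_cancel_left]
  have hpe2 : ∑ j, vnorm (pe j) ^ 2 ≤ (k : ℝ) * opnorm E ^ 2 := by
    have h := sum_vnorm_projE_sq_le DX.hU r E
    have hrk' : (r : ℝ) ≤ (k : ℝ) := Nat.cast_le.mpr hrk
    calc ∑ j, vnorm (pe j) ^ 2 ≤ (r : ℝ) * opnorm E ^ 2 := h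
      _ ≤ (k : ℝ) * opnorm E ^ 2 := mul_le_mul_of_nonneg_right hrk' (sq_nonneg _)
  set Bad : Finset (Fin n) := Finset.univ.filter
    (fun j => 2 * d < vnorm (pX j - c (zh j)) ∨ 2 * d < vnorm (pe j)) with hBad
  have hBadcard : (Bad.card : ℝ) < mR / 2 := by
    have htot : ∑ j, (vnorm (pX j - c (zh j)) ^ 2 + vnorm (pe j) ^ 2) ≤ 2 * (d ^ 2 * mR) := by
      rw [Finset.sum_add_distrib]
      linarith [hcost, hpe2, hE2]
    have hterm : ∀ j, 0 ≤ vnorm (pX j - c (zh j)) ^ 2 + vnorm (pe j) ^ 2 := by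
      intro j; positivity
    rcases Finset.eq_empty_or_nonempty Bad with he | hne
    · rw [he]
      simp only [Finset.card_empty, Nat.cast_zero]
      positivity
    · have hb : ∀ j ∈ Bad, 4 * d ^ 2 < vnorm (pX j - c (zh j)) ^ 2 + vnorm (pe j) ^ 2 := by
        intro j hj
        rw [hBad, Finset.mem_filter] at hj
        rcases hj.2 with h | h
        · nlinarith [vnorm_nonneg (pX j - c (zh j)), sq_nonneg (vnorm (pe j))]
        · nlinarith [vnorm_nonneg (pe j), sq_nonneg (vnorm (pX j - c (zh j)))]
      have h1 : (Bad.card : ℝ) * (4 * d ^ 2)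
          < ∑ j ∈ Bad, (vnorm (pX j - c (zh j)) ^ 2 + vnorm (pe j) ^ 2) := by
        have := Finset.sum_lt_sum_of_nonempty hne hb
        rwa [Finset.sum_const, nsmul_eq_mul] at this
      have h2 : ∑ j ∈ Bad, (vnorm (pX j - c (zh j)) ^ 2 + vnorm (pe j) ^ 2)
          ≤ ∑ j, (vnorm (pX j - c (zh j)) ^ 2 + vnorm (pe j) ^ 2) :=
        Finset.sum_le_sum_of_subset_of_nonneg (Finset.subset_univ _) fun j _ _ => hterm j
      nlinarith [hdpos]
  have hgood : ∀ a : Fin k, ∃ j, z j = a ∧ j ∉ Bad := by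
    intro a
    have h1 : (SA a \ Bad).Nonempty := by
      rw [Finset.sdiff_nonempty]
      intro hsub
      have h2 : ((SA a).card : ℝ) ≤ (Bad.card : ℝ) :=
        Nat.cast_le.mpr (Finset.card_le_card hsub)
      linarith [hmle a, hBadcard, hmpos]
    obtain ⟨j, hj⟩ := h1
    rw [Finset.mem_sdiff] at hj
    refine ⟨j, ?_, hj.2⟩
    have := hj.1
    rw [hSA] at this
    simpa using this
  choose g hg1 hg2 using hgood
  set σ0 : Fin k → Fin k := fun a => zh (g a) with hσ0
  -- opnorm of (1 - Pr) * Pm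
  have hsym1 : (1 - Pr)ᵀ = 1 - Pr := by
    rw [Matrix.transpose_sub, Matrix.transpose_one, hPrdef, projr_symm]
  have hidem1 : (1 - Pr) * (1 - Pr) = 1 - Pr := by
    simp only [Matrix.sub_mul, Matrix.mul_sub, Matrix.one_mul, Matrix.mul_one]
    rw [hPrdef, projr_idem DX.hU]
    abel
  set Nm : Matrix (Fin p) (Fin n) ℝ := (1 - Pr) * Pm with hNm
  have hNop : opnorm Nm ≤ 2 * opnorm E := by
    have h1 : Nm = (1 - Pr) * X - (1 - Pr) * E := by
      rw [hNm]
      rw [hXPE, Matrix.mul_add, add_sub_cancel_right]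
    rw [h1]
    refine le_trans opnorm_sub_le ?_
    have h2 : opnorm ((1 - Pr) * X) ≤ opnorm E :=
      le_trans (opnorm_one_sub_projr_X_le DX r) (sv_le_opnormE DX hXPE hrank hκr)
    have h3 : opnorm ((1 - Pr) * E) ≤ opnorm E := by
      apply opnorm_le _ _ (opnorm_nonneg E)
      intro v
      rw [← Matrix.mulVec_mulVec]
      exact le_trans (proj_contract hsym1 hidem1 _)
        (vnorm_mulVec_le E v)
    linarith
  have hopEd : opnorm E ≤ d * Real.sqrt mR := by
    nlinarith [hE2, Real.sq_sqrt hm0, Real.sqrt_nonneg mR, hdpos, hopE,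
      (show (1 : ℝ) ≤ (k : ℝ) from by exact_mod_cast hk0),
      mul_nonneg hdnn (Real.sqrt_nonneg mR)]
  have hq : ∀ a : Fin k, vnorm (θ a - qc a) ≤ 2 * d := by
    intro a
    have hcol : ∀ j ∈ SA a, ∀ b : Fin p, Nm b j = (θ a - qc a) b := by
      intro j hj b
      have hza : z j = a := by
        have := hj; rw [hSA] at this; simpa using this
      have h1 : Nm b j = ((1 - Pr).mulVec (fun b' => Pm b' j)) b := by
        rw [hNm]
        simp [Matrix.mul_apply, Matrix.mulVec, dotProduct]
      rw [h1]
      have h2 : (fun b' => Pm b' j) = θ a := by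
        funext b'; rw [hP, hza]
      rw [h2]
      have h3 : (1 - Pr).mulVec (θ a) = θ a - Pr.mulVec (θ a) := by
        rw [Matrix.sub_mulVec, Matrix.one_mulVec]
      rw [h3]
    have hb := col_norm_bound Nm (SA a) (θ a - qc a) hcol
    have hs1 : Real.sqrt mR ≤ Real.sqrt ((SA a).card) := Real.sqrt_le_sqrt (hmle a)
    have hv := vnorm_nonneg (θ a - qc a)
    have hchain : Real.sqrt mR * vnorm (θ a - qc a) ≤ 2 * (d * Real.sqrt mR) := by
      calc Real.sqrt mR * vnorm (θ a - qc a)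
          ≤ Real.sqrt ((SA a).card) * vnorm (θ a - qc a) :=
            mul_le_mul_of_nonneg_right hs1 hv
        _ ≤ opnorm Nm := hb
        _ ≤ 2 * opnorm E := hNop
        _ ≤ 2 * (d * Real.sqrt mR) := by linarith [hopEd]
    have hsm : 0 < Real.sqrt mR := Real.sqrt_pos.mpr hmpos
    nlinarith [hchain, hsm, hv]
  have hDle : ∀ a b : Fin k, a ≠ b → Delta θ ≤ vnorm (θ a - θ b) := by
    intro a b hab
    have hbd2 : BddBelow (Set.range fun q : {q : Fin k × Fin k // q.1 ≠ q.2} =>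
        vnorm (fun i => θ q.1.1 i - θ q.1.2 i)) :=
      ⟨0, by rintro x ⟨qq, rfl⟩; exact vnorm_nonneg _⟩
    exact ciInf_le hbd2 ⟨(a, b), hab⟩
  have hnotBad : ∀ j, j ∉ Bad →
      vnorm (pX j - c (zh j)) ≤ 2 * d ∧ vnorm (pe j) ≤ 2 * d := by
    intro j hj
    rw [hBad, Finset.mem_filter] at hj
    push_neg at hj
    have := hj (Finset.mem_univ j)
    exact this
  have hcen : ∀ a : Fin k, vnorm (c (σ0 a) - θ a) ≤ 6 * d := by
    intro a
    obtain ⟨h1a, h1b⟩ := hnotBad (g a) (hg2 a)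
    have hsp : pX (g a) - θ a = (qc a - θ a) + pe (g a) := by
      rw [hsplit (g a), hg1 a]
      abel
    have h2 : vnorm (pX (g a) - θ a) ≤ 4 * d := by
      rw [hsp]
      refine le_trans (vnorm_add_le _ _) ?_
      have h3 : vnorm (qc a - θ a) ≤ 2 * d := by
        rw [vnorm_sub_symm]; exact hq a
      linarith
    calc vnorm (c (σ0 a) - θ a)
        ≤ vnorm (c (σ0 a) - pX (g a)) + vnorm (pX (g a) - θ a) := vnorm_triangle3 _ _ _
      _ ≤ 2 * d + 4 * d := by
          have h4 : vnorm (c (σ0 a) - pX (g a)) ≤ 2 * d := by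
            rw [hσ0, vnorm_sub_symm]
            exact h1a
          linarith
      _ = 6 * d := by ring
  have hinj : Function.Injective σ0 := by
    intro a a' hne
    by_contra hne2
    have h1 : Delta θ ≤ vnorm (θ a - θ a') := hDle a a' hne2
    have h2 : vnorm (θ a - θ a') ≤ vnorm (θ a - c (σ0 a)) + vnorm (c (σ0 a) - θ a') :=
      vnorm_triangle3 _ _ _
    have h3 : vnorm (θ a - c (σ0 a)) ≤ 6 * d := by
      rw [vnorm_sub_symm]; exact hcen a
    have h4 : vnorm (c (σ0 a) - θ a') ≤ 6 * d := by
      rw [hne]; exact hcen a'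
    linarith [hΔ16, hdpos]
  set σ : Equiv.Perm (Fin k) := Equiv.ofBijective σ0 (Finite.injective_iff_bijective.mp hinj)
    with hσ
  have hσap : ∀ a, σ a = σ0 a := fun a => rfl
  have hgm : ∀ j, j ∉ Bad → zh j = σ0 (z j) := by
    intro j hjB
    obtain ⟨h1a, h1b⟩ := hnotBad j hjB
    by_contra hne
    have ha'' : σ0 (σ.symm (zh j)) = zh j := by
      have := σ.apply_symm_apply (zh j)
      rwa [hσap] at this
    have hne2 : z j ≠ σ.symm (zh j) := by
      intro he
      rw [← he] at ha''
      exact hne ha''.symm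
    have hD := hDle (z j) (σ.symm (zh j)) hne2
    have t1 : vnorm (θ (z j) - pX j) ≤ 4 * d := by
      have hsp : θ (z j) - pX j = (θ (z j) - qc (z j)) - pe j := by
        rw [hsplit j]; abel
      rw [hsp]
      refine le_trans (vnorm_sub_le' _ _) ?_
      linarith [hq (z j)]
    have t3 : vnorm (c (zh j) - θ (σ.symm (zh j))) ≤ 6 * d := by
      have := hcen (σ.symm (zh j))
      rwa [ha''] at this
    have hT : vnorm (θ (z j) - θ (σ.symm (zh j)))
        ≤ vnorm (θ (z j) - pX j) + (vnorm (pX j - c (zh j))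
          + vnorm (c (zh j) - θ (σ.symm (zh j)))) := by
      refine le_trans (vnorm_triangle3 _ (pX j) _) ?_
      have := vnorm_triangle3 (pX j) (c (zh j)) (θ (σ.symm (zh j)))
      linarith
    linarith [hΔ16, hdpos]
  set Mσ : Finset (Fin n) := Finset.univ.filter (fun j => zh j ≠ σ0 (z j)) with hMσ
  set Mφ : Finset (Fin n) := Finset.univ.filter (fun j => zh j ≠ φ (z j)) with hMφ
  have hMσBad : Mσ ⊆ Bad := by
    intro j hj
    by_contra hjB
    have h1 := hgm j hjB
    rw [hMσ, Finset.mem_filter] at hj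
    exact hj.2 h1
  have hminim : (Mφ.card : ℝ) ≤ (Mσ.card : ℝ) := by
    have hbd3 : BddBelow (Set.range fun ψ : Equiv.Perm (Fin k) =>
        ((Finset.univ.filter fun j => zh j ≠ ψ (z j)).card : ℝ)) :=
      ⟨0, by rintro x ⟨ψ, rfl⟩; positivity⟩
    have h1 := ciInf_le hbd3 σ
    have h2 : (Finset.univ.filter fun j => zh j ≠ σ (z j)) = Mσ := by
      rw [hMσ]
      apply Finset.filter_congr
      intro j _
      rw [hσap]
    rw [h2] at h1
    have h3 : miscl zh z = (⨅ ψ : Equiv.Perm (Fin k),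
        ((Finset.univ.filter fun j => zh j ≠ ψ (z j)).card : ℝ)) / n := rfl
    rw [h3] at hφ
    have hn' : (0:ℝ) < (n : ℝ) := by positivity
    have h4 : (Mφ.card : ℝ) = (⨅ ψ : Equiv.Perm (Fin k),
        ((Finset.univ.filter fun j => zh j ≠ ψ (z j)).card : ℝ)) := by
      field_simp at hφ
      rw [hMφ]
      linarith [hφ]
    rw [h4]
    exact h1
  have hφσ : ∀ a, φ a = σ0 a := by
    by_contra hcon
    push_neg at hcon
    obtain ⟨a, ha⟩ := hcon
    have h1 : SA a ⊆ Mφ ∪ Mσ := by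
      intro j hj
      have hza : z j = a := by
        have := hj; rw [hSA] at this; simpa using this
      by_cases hjM : j ∈ Mσ
      · exact Finset.mem_union_right _ hjM
      · have h2 : zh j = σ0 (z j) := by
          rw [hMσ, Finset.mem_filter] at hjM
          push_neg at hjM
          exact hjM (Finset.mem_univ j)
        apply Finset.mem_union_left
        rw [hMφ, Finset.mem_filter]
        refine ⟨Finset.mem_univ j, ?_⟩
        rw [hza] at h2 ⊢
        rw [h2]
        exact fun he => ha he.symm
    have h2 : (SA a).card ≤ Mφ.card + Mσ.card :=
      le_trans (Finset.card_le_card h1) (Finset.card_union_le _ _)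
    have h3 : (Mσ.card : ℝ) ≤ (Bad.card : ℝ) :=
      Nat.cast_le.mpr (Finset.card_le_card hMσBad)
    have h4 : ((SA a).card : ℝ) ≤ (Mφ.card : ℝ) + (Mσ.card : ℝ) := by
      exact_mod_cast h2
    linarith [hmle a, hBadcard, hminim]
  -- per-point optimality
  have hpp : ∀ b' : Fin k, vnorm (pX i0 - c (zh i0)) ≤ vnorm (pX i0 - c b') := by
    intro b'
    have h := hkm (Function.update zh i0 b') c
    have hF : ∀ j, (∑ a, (pX j a - c (zh j) a) ^ 2) = vnorm (pX j - c (zh j)) ^ 2 :=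
      fun j => hsum_eq _ _
    have hG : ∀ j, (∑ a, (pX j a - c (Function.update zh i0 b' j) a) ^ 2)
        = vnorm (pX j - c (Function.update zh i0 b' j)) ^ 2 := fun j => hsum_eq _ _
    have h' : ∑ j, vnorm (pX j - c (zh j)) ^ 2
        ≤ ∑ j, vnorm (pX j - c (Function.update zh i0 b' j)) ^ 2 := by
      calc ∑ j, vnorm (pX j - c (zh j)) ^ 2
          = ∑ j, ∑ a, (pX j a - c (zh j) a) ^ 2 :=
            Finset.sum_congr rfl fun j _ => (hF j).symm
        _ ≤ ∑ j, ∑ a, (pX j a - c (Function.update zh i0 b' j) a) ^ 2 := h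
        _ = ∑ j, vnorm (pX j - c (Function.update zh i0 b' j)) ^ 2 :=
            Finset.sum_congr rfl fun j _ => hG j
    have hsplit1 : ∑ j, vnorm (pX j - c (zh j)) ^ 2
        = vnorm (pX i0 - c (zh i0)) ^ 2 + ∑ j ∈ Finset.univ.erase i0, vnorm (pX j - c (zh j)) ^ 2 :=
      (Finset.add_sum_erase _ _ (Finset.mem_univ i0)).symm
    have hsplit2 : ∑ j, vnorm (pX j - c (Function.update zh i0 b' j)) ^ 2
        = vnorm (pX i0 - c b') ^ 2
          + ∑ j ∈ Finset.univ.erase i0, vnorm (pX j - c (Function.update zh i0 b' j)) ^ 2 := by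
      rw [← (Finset.add_sum_erase _ _ (Finset.mem_univ i0))]
      rw [Function.update_self]
    have heq : ∑ j ∈ Finset.univ.erase i0, vnorm (pX j - c (Function.update zh i0 b' j)) ^ 2
        = ∑ j ∈ Finset.univ.erase i0, vnorm (pX j - c (zh j)) ^ 2 := by
      refine Finset.sum_congr rfl fun j hj => ?_
      rw [Function.update_of_ne (Finset.ne_of_mem_erase hj)]
    rw [hsplit1, hsplit2, heq] at h'
    have h5 : vnorm (pX i0 - c (zh i0)) ^ 2 ≤ vnorm (pX i0 - c b') ^ 2 := by linarith
    nlinarith [vnorm_nonneg (pX i0 - c (zh i0)), vnorm_nonneg (pX i0 - c b')]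
  -- final chain
  have hbne : zh i0 ≠ σ0 (z i0) := by
    rw [← hφσ (z i0)]; exact hmis
  have ha'' : σ0 (σ.symm (zh i0)) = zh i0 := by
    have := σ.apply_symm_apply (zh i0)
    rwa [hσap] at this
  have hne2 : z i0 ≠ σ.symm (zh i0) := by
    intro he
    rw [← he] at ha''
    exact hbne ha''.symm
  have hD := hDle (z i0) (σ.symm (zh i0)) hne2
  set peN : ℝ := vnorm (pe i0) with hpeN
  have t1 : vnorm (θ (z i0) - pX i0) ≤ 2 * d + peN := by
    have hsp : θ (z i0) - pX i0 = (θ (z i0) - qc (z i0)) - pe i0 := by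
      rw [hsplit i0]; abel
    rw [hsp]
    refine le_trans (vnorm_sub_le' _ _) ?_
    linarith [hq (z i0)]
  have t2 : vnorm (pX i0 - c (zh i0)) ≤ (2 * d + peN) + 6 * d := by
    refine le_trans (hpp (σ0 (z i0))) ?_
    calc vnorm (pX i0 - c (σ0 (z i0)))
        ≤ vnorm (pX i0 - θ (z i0)) + vnorm (θ (z i0) - c (σ0 (z i0))) := vnorm_triangle3 _ _ _
      _ ≤ (2 * d + peN) + 6 * d := by
          have h1 : vnorm (pX i0 - θ (z i0)) ≤ 2 * d + peN := by
            rw [vnorm_sub_symm]; exact t1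
          have h2 : vnorm (θ (z i0) - c (σ0 (z i0))) ≤ 6 * d := by
            rw [vnorm_sub_symm]; exact hcen (z i0)
          linarith
  have t3 : vnorm (c (zh i0) - θ (σ.symm (zh i0))) ≤ 6 * d := by
    have := hcen (σ.symm (zh i0))
    rwa [ha''] at this
  have hT : Delta θ ≤ 2 * peN + 16 * d := by
    have h1 : vnorm (θ (z i0) - θ (σ.symm (zh i0)))
        ≤ vnorm (θ (z i0) - pX i0) + (vnorm (pX i0 - c (zh i0))
          + vnorm (c (zh i0) - θ (σ.symm (zh i0)))) := by
      refine le_trans (vnorm_triangle3 _ (pX i0) _) ?_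
      have := vnorm_triangle3 (pX i0) (c (zh i0)) (θ (σ.symm (zh i0)))
      linarith
    linarith [hD, t1, t2, t3]
  show (1 - 512 * (Delta θ / d)⁻¹) * Delta θ ≤ 2 * peN
  have harith : (1 - 512 * (Delta θ / d)⁻¹) * Delta θ = Delta θ - 512 * d := by
    rw [inv_div]
    field_simp
  rw [harith]
  linarith [hT, hdpos]
end
end

section
/- Let P ∈ ℝ^{p×n} be a matrix with exactly k distinct columns θ*_1,…,θ*_k ∈ ℝ^p, each appearing at least βn/k times, and let κ be the rank of P with singular values λ_1 ≥ … ≥ λ_κ > 0. For i ∈ [n], let P_{−i} ∈ ℝ^{p×(n−1)} be P with its i-th column removed, with singular values λ_{−i,1} ≥ λ_{−i,2} ≥ …. If βn/k ≥ 2, then for every i ∈ [n]: (a) P_{−i} has rank κ, its leading left singular subspace (the span of left singular vectors corresponding to nonzero singular values) equals that of P, and λ_{−i,κ+1} = 0; and (b) λ_{−i,κ}² ≥ (1 − k/(βn)) λ_κ². -/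
open Matrix MeasureTheory ProbabilityTheory
open scoped BigOperators ENNReal NNReal

noncomputable section

section Lemma8Helpers

lemma onb_cross {p : ℕ} {ι : Type*} [Fintype ι] [DecidableEq ι] {v : ι → Fin p → ℝ}
    (h : ∀ a b, ∑ i, v a i * v b i = if a = b then 1 else 0) (c d : ι → ℝ) :
    ∑ i, (∑ a, c a * v a i) * (∑ b, d b * v b i) = ∑ a, c a * d a := by
  have key : ∀ i : Fin p, (∑ a, c a * v a i) * (∑ b, d b * v b i)
      = ∑ a, ∑ b, (c a * d b) * (v a i * v b i) := by
    intro i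
    rw [Finset.sum_mul_sum]
    exact Finset.sum_congr rfl fun a _ => Finset.sum_congr rfl fun b _ => by ring
  simp_rw [key]
  rw [Finset.sum_comm]
  have key2 : ∀ a, ∑ i : Fin p, ∑ b, (c a * d b) * (v a i * v b i) = c a * d a := by
    intro a
    rw [Finset.sum_comm]
    have : ∀ b, ∑ i : Fin p, (c a * d b) * (v a i * v b i)
        = (c a * d b) * (if a = b then 1 else 0) := by
      intro b; rw [← h a b, Finset.mul_sum]
    simp_rw [this]
    simp [Finset.sum_ite_eq]
  simp_rw [key2]

lemma onb_linIndep {p : ℕ} {ι : Type*} [Fintype ι] [DecidableEq ι] {v : ι → Fin p → ℝ}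
    (h : ∀ a b, ∑ i, v a i * v b i = if a = b then 1 else 0) :
    LinearIndependent ℝ v := by
  rw [Fintype.linearIndependent_iff]
  intro g hg b
  have h0 : ∀ i : Fin p, (∑ a, g a * v a i) = 0 := by
    intro i
    have := congrFun hg i
    simpa [Finset.sum_apply] using this
  have := onb_cross h g (fun a => if a = b then 1 else 0)
  simp only [h0, zero_mul, Finset.sum_const_zero] at this
  simp only [mul_ite, mul_one, mul_zero, Finset.sum_ite_eq', Finset.mem_univ, if_true] at this
  exact this.symm

lemma colOrtho {q m : ℕ} {V : Matrix (Fin q) (Fin m) ℝ} (hV : Vᵀ * V = 1) :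
    ∀ a b, ∑ j, V j a * V j b = if a = b then 1 else 0 := by
  intro a b
  have := congrFun (congrFun hV a) b
  simpa [Matrix.mul_apply, Matrix.one_apply, transpose_apply] using this

lemma rowOrtho {p : ℕ} {U : Matrix (Fin p) (Fin p) ℝ} (hU : Uᵀ * U = 1) :
    ∀ a b, ∑ l, U a l * U b l = if a = b then 1 else 0 := by
  intro a b
  have h1 : U * Uᵀ = 1 := mul_eq_one_comm.mp hU
  have := congrFun (congrFun h1 a) b
  simpa [Matrix.mul_apply, Matrix.one_apply, transpose_apply] using this

lemma onb_norm {p : ℕ} {U : Matrix (Fin p) (Fin p) ℝ} (hU : Uᵀ * U = 1) (x : Fin p → ℝ) :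
    ∑ l : Fin p, (∑ t, U t l * x t) ^ 2 = ∑ i, x i ^ 2 := by
  have e : ∀ l : Fin p, (∑ t, U t l * x t) = ∑ t, x t * U t l := by
    intro l; exact Finset.sum_congr rfl fun t _ => mul_comm _ _
  simp_rw [e, sq]
  exact onb_cross (v := fun a => fun l => U a l) (rowOrtho hU) x x

lemma span_support {p : ℕ} {U : Matrix (Fin p) (Fin p) ℝ} (hU : Uᵀ * U = 1)
    (s : Set (Fin p)) (x : Fin p → ℝ)
    (hx : x ∈ Submodule.span ℝ ((fun l => fun i => U i l) '' s))
    (l' : Fin p) (hl' : l' ∉ s) : ∑ t, U t l' * x t = 0 := by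
  induction hx using Submodule.span_induction with
  | mem y hy =>
      obtain ⟨l, hl, rfl⟩ := hy
      have : l' ≠ l := fun h => hl' (h ▸ hl)
      simpa [this] using colOrtho hU l' l
  | zero => simp
  | add y z _ _ hy hz => simp [Finset.mul_sum, mul_add, Finset.sum_add_distrib, hy, hz]
  | smul a y _ hy =>
      simp only [Pi.smul_apply, smul_eq_mul]
      rw [show ∑ t, U t l' * (a * y t) = a * ∑ t, U t l' * y t by
        rw [Finset.mul_sum]; exact Finset.sum_congr rfl fun t _ => by ring, hy]
      ring

lemma onb_finrank_span {p m : ℕ} {U : Matrix (Fin p) (Fin p) ℝ} (hU : Uᵀ * U = 1)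
    (e : Fin m → Fin p) (he : Function.Injective e) :
    Module.finrank ℝ
      (Submodule.span ℝ (Set.range fun l : Fin m => fun t => U t (e l))) = m := by
  have honb : ∀ a b : Fin m, ∑ t, U t (e a) * U t (e b) = if a = b then 1 else 0 := by
    intro a b; rw [colOrtho hU (e a) (e b)]
    simp [he.eq_iff]
  rw [finrank_span_eq_card (onb_linIndep honb)]
  simp

lemma svd_quadform' {p n : ℕ} (U : Matrix (Fin p) (Fin p) ℝ)
    (V : Matrix (Fin n) (Fin n) ℝ) (sv : ℕ → ℝ)
    (hV : Vᵀ * V = 1) (sv_zero : ∀ j, min p n ≤ j → sv j = 0)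
    (A : Matrix (Fin p) (Fin n) ℝ)
    (hA : A = U * (Matrix.of fun (i : Fin p) (j : Fin n) =>
        if (i : ℕ) = (j : ℕ) then sv (i : ℕ) else 0) * Vᵀ)
    (x : Fin p → ℝ) :
    ∑ j, (∑ a, A a j * x a) ^ 2
      = ∑ l : Fin p, sv l ^ 2 * (∑ t, U t l * x t) ^ 2 := by
  subst hA
  set c : Fin p → ℝ := fun l => ∑ t, U t l * x t with hc
  set w : Fin n → ℝ := fun j =>
    ∑ l : Fin p, (if (l : ℕ) = (j : ℕ) then sv l else 0) * c l with hw
  set A := U * (Matrix.of fun (i : Fin p) (j : Fin n) =>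
      if (i : ℕ) = (j : ℕ) then sv (i : ℕ) else 0) * Vᵀ with hA
  have h1 : ∀ j, (∑ a, A a j * x a) = ∑ b, w b * V j b := by
    intro j
    have hx : (∑ a, A a j * x a) = (x ᵥ* A) j := by
      simp [Matrix.vecMul, dotProduct, mul_comm]
    rw [hx, hA, ← Matrix.vecMul_vecMul, ← Matrix.vecMul_vecMul]
    have e1 : x ᵥ* U = c := by
      funext l; simp [Matrix.vecMul, dotProduct, hc, mul_comm]
    rw [e1]
    have e2 : (c ᵥ* Matrix.of fun (i : Fin p) (j : Fin n) =>
        if (i : ℕ) = (j : ℕ) then sv (i : ℕ) else 0) = w := by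
      funext jj; simp [Matrix.vecMul, dotProduct, hw, mul_comm]
    rw [e2]
    simp [Matrix.vecMul, dotProduct, transpose_apply, mul_comm]
  have h2 : ∑ j, (∑ a, A a j * x a) ^ 2 = ∑ b, w b ^ 2 := by
    simp_rw [h1, sq]
    exact onb_cross (v := fun b => fun j => V j b) (colOrtho hV) w w
  rw [h2]
  set F : ℕ → ℝ := fun m => if hm : m < p then sv m * c ⟨m, hm⟩ else 0 with hF
  have hwF : ∀ j : Fin n, w j = F (j : ℕ) := by
    intro j
    by_cases hjp : (j : ℕ) < p
    · show ∑ l : Fin p, (if (l : ℕ) = (j : ℕ) then sv l else 0) * c l = _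
      rw [Finset.sum_eq_single (⟨(j : ℕ), hjp⟩ : Fin p)]
      · simp [hF, hjp]
      · intro l _ hne
        have : (l : ℕ) ≠ (j : ℕ) := fun h => hne (Fin.ext h)
        simp [this]
      · simp
    · have hz : ∀ l : Fin p, (l : ℕ) ≠ (j : ℕ) := fun l h => hjp (h ▸ l.isLt)
      show ∑ l : Fin p, (if (l : ℕ) = (j : ℕ) then sv l else 0) * c l = _
      simp [hz, hF, hjp]
  have hFz : ∀ m, min p n ≤ m → F m ^ 2 = 0 := by
    intro m hm
    by_cases hmp : m < p
    · have : sv m = 0 := sv_zero m hm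
      simp [hF, hmp, this]
    · simp [hF, hmp]
  have hA2 : ∑ b, w b ^ 2 = ∑ m ∈ Finset.range n, F m ^ 2 := by
    simp_rw [hwF]
    exact Fin.sum_univ_eq_sum_range (fun m => F m ^ 2) n
  have hB2 : ∑ l : Fin p, sv l ^ 2 * c l ^ 2 = ∑ m ∈ Finset.range p, F m ^ 2 := by
    have e : ∀ l : Fin p, sv l ^ 2 * c l ^ 2 = F (l : ℕ) ^ 2 := by
      intro l
      have : F (l : ℕ) = sv l * c l := by simp [hF, l.isLt]
      rw [this, mul_pow]
    simp_rw [e]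
    exact Fin.sum_univ_eq_sum_range (fun m => F m ^ 2) p
  have hmid : ∑ m ∈ Finset.range n, F m ^ 2 = ∑ m ∈ Finset.range p, F m ^ 2 := by
    have e1 : ∑ m ∈ Finset.range (min p n), F m ^ 2 = ∑ m ∈ Finset.range n, F m ^ 2 :=
      Finset.sum_subset (Finset.range_subset_range.mpr (min_le_right p n))
        (fun m hm hnm => hFz m (by simp only [Finset.mem_range] at *; omega))
    have e2 : ∑ m ∈ Finset.range (min p n), F m ^ 2 = ∑ m ∈ Finset.range p, F m ^ 2 :=
      Finset.sum_subset (Finset.range_subset_range.mpr (min_le_left p n))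
        (fun m hm hnm => hFz m (by simp only [Finset.mem_range] at *; omega))
    rw [← e1, e2]
  rw [hA2, hmid, ← hB2]

lemma svd_col_mem {p n : ℕ} (U : Matrix (Fin p) (Fin p) ℝ) (V : Matrix (Fin n) (Fin n) ℝ)
    (sv : ℕ → ℝ) (hV : Vᵀ * V = 1) {l : ℕ} (hlp : l < p) (hln : l < n) (hsv : sv l ≠ 0) :
    (U * (Matrix.of fun (i : Fin p) (j : Fin n) =>
        if (i : ℕ) = (j : ℕ) then sv (i : ℕ) else 0) * Vᵀ) *ᵥ
      (fun j => (sv l)⁻¹ * V j ⟨l, hln⟩) = fun t => U t ⟨l, hlp⟩ := by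
  rw [← Matrix.mulVec_mulVec, ← Matrix.mulVec_mulVec]
  have e1 : Vᵀ *ᵥ (fun j => (sv l)⁻¹ * V j ⟨l, hln⟩)
      = fun b => if b = (⟨l, hln⟩ : Fin n) then (sv l)⁻¹ else 0 := by
    funext b
    have : ∑ j, V j b * ((sv l)⁻¹ * V j ⟨l, hln⟩)
        = (sv l)⁻¹ * ∑ j, V j b * V j ⟨l, hln⟩ := by
      rw [Finset.mul_sum]; exact Finset.sum_congr rfl fun j _ => by ring
    simp only [Matrix.mulVec, dotProduct, transpose_apply]
    rw [this, colOrtho hV]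
    by_cases hb : b = (⟨l, hln⟩ : Fin n) <;> simp [hb]
  rw [e1]
  have e2 : (Matrix.of fun (i : Fin p) (j : Fin n) =>
        if (i : ℕ) = (j : ℕ) then sv (i : ℕ) else 0) *ᵥ
      (fun b => if b = (⟨l, hln⟩ : Fin n) then (sv l)⁻¹ else 0)
      = fun t => if t = (⟨l, hlp⟩ : Fin p) then 1 else 0 := by
    funext t
    simp only [Matrix.mulVec, dotProduct, Matrix.of_apply]
    rw [Finset.sum_eq_single (⟨l, hln⟩ : Fin n)]
    · by_cases ht : t = (⟨l, hlp⟩ : Fin p)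
      · subst ht; simp [hsv]
      · have : (t : ℕ) ≠ l := fun h => ht (Fin.ext h)
        simp [this, ht]
    · intro b _ hb; simp [hb]
    · simp
  rw [e2]
  funext t
  simp only [Matrix.mulVec, dotProduct]
  rw [Finset.sum_eq_single (⟨l, hlp⟩ : Fin p)]
  · simp
  · intro b _ hb; simp [hb]
  · simp

end Lemma8Helpers

/-- **Lemma 8 (leave-one-out stability of the signal matrix).**
`P ∈ ℝ^{p×(n+1)}` has exactly `k` distinct columns `θ*_1,…,θ*_k`, each appearing at least
`βn/k` times, `rank P = κ ∈ [k]`.  If `βn/k ≥ 2` then for every `i`: (a) `P_{−i}` has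
rank `κ`, its column span (= leading left singular subspace) equals that of `P`, and
`λ_{−i,κ+1} = 0`; (b) `λ_{−i,κ}² ≥ (1 − k/(βn)) λ_κ²`. -/
theorem signal_matrix_leave_one_out
    (p n k : ℕ) (z : Fin (n + 1) → Fin k) (θ : Fin k → Fin p → ℝ)
    (hθ : Function.Injective θ)
    (Pm : Matrix (Fin p) (Fin (n + 1)) ℝ) (hP : ∀ a j, Pm a j = θ (z j) a)
    (hβ : 2 ≤ betaMin (n + 1) k z * ((n : ℝ) + 1) / (k : ℝ))
    (κ : ℕ) (hκ0 : 0 < κ) (hκk : κ ≤ k) (hrank : Pm.rank = κ)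
    (DP : SVDData p (n + 1) Pm)
    (i : Fin (n + 1)) (DPi : SVDData p n (Pm.submatrix id i.succAbove)) :
    (Pm.submatrix id i.succAbove).rank = κ ∧
    Submodule.span ℝ
        (Set.range fun j : Fin n => fun a : Fin p => Pm.submatrix id i.succAbove a j) =
      Submodule.span ℝ (Set.range fun j : Fin (n + 1) => fun a : Fin p => Pm a j) ∧
    DPi.sv κ = 0 ∧
    (1 - (k : ℝ) / (betaMin (n + 1) k z * ((n : ℝ) + 1))) * DP.sv (κ - 1) ^ 2 ≤
      DPi.sv (κ - 1) ^ 2 := by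
  classical
  obtain ⟨U, V, sv, hU, hV, hanti, hnn, hzero, hdec⟩ := DP
  obtain ⟨U', V', sv', hU', hV', hanti', hnn', hzero', hdec'⟩ := DPi
  simp only
  set A' := Pm.submatrix id i.succAbove with hA'
  have hk : 0 < k := (z i).pos
  have hκp : κ ≤ p := by
    have := Pm.rank_le_card_height
    rw [hrank, Fintype.card_fin] at this
    exact this
  have hκn1 : κ ≤ n + 1 := by
    have := Pm.rank_le_card_width
    rw [hrank, Fintype.card_fin] at this
    exact this
  -- cluster sizes
  set Nf : Fin k → ℝ := fun a => (((Finset.univ.filter fun j => z j = a).card : ℕ) : ℝ)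
    with hNf
  have hNmin : ∀ a, (⨅ b, Nf b) ≤ Nf a := fun a =>
    ciInf_le (Set.Finite.bddBelow (Set.finite_range Nf)) a
  have hk0 : (k : ℝ) ≠ 0 := Nat.cast_ne_zero.mpr hk.ne'
  have hn0 : ((n : ℝ) + 1) ≠ 0 := by positivity
  have hbm : betaMin (n + 1) k z * ((n : ℝ) + 1) / k = ⨅ b, Nf b := by
    unfold betaMin
    push_cast
    field_simp
    rfl
  have h2N : (2 : ℝ) ≤ ⨅ b, Nf b := hbm ▸ hβ
  have hcard2 : ∀ a : Fin k, 2 ≤ (Finset.univ.filter fun j => z j = a).card := by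
    intro a
    have h := le_trans h2N (hNmin a)
    rw [hNf] at h
    simp only at h
    exact_mod_cast h
  -- column sets coincide
  have hcols : (Set.range fun j : Fin n => fun a : Fin p => A' a j)
      = (Set.range fun j : Fin (n + 1) => fun a : Fin p => Pm a j) := by
    apply Set.Subset.antisymm
    · rintro _ ⟨t, rfl⟩
      exact ⟨i.succAbove t, rfl⟩
    · rintro _ ⟨j, rfl⟩
      by_cases hji : j = i
      · subst hji
        obtain ⟨j', hj', hne⟩ :=
          Finset.exists_mem_ne
            (s := Finset.univ.filter fun t => z t = z j) (by
              have := hcard2 (z j); omega) j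
        have hzj' : z j' = z j := (Finset.mem_filter.mp hj').2
        obtain ⟨t, ht⟩ := Fin.exists_succAbove_eq hne
        refine ⟨t, ?_⟩
        funext a
        show Pm a (j.succAbove t) = Pm a j
        rw [ht, hP, hP, hzj']
      · obtain ⟨t, ht⟩ := Fin.exists_succAbove_eq hji
        exact ⟨t, by funext a; show Pm a (i.succAbove t) = Pm a j; rw [ht]⟩
  have hTranA : Set.range A'ᵀ = Set.range fun j : Fin n => fun a : Fin p => A' a j := rfl
  have hTranP : Set.range Pmᵀ
      = Set.range fun j : Fin (n + 1) => fun a : Fin p => Pm a j := rfl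
  have hrank' : A'.rank = κ := by
    have e1 : A'.rank = Module.finrank ℝ (Submodule.span ℝ (Set.range A'ᵀ)) := by
      rw [show A'.rank = Module.finrank ℝ (LinearMap.range A'.mulVecLin) from rfl,
        Matrix.range_mulVecLin]
      rfl
    have e2 : Pm.rank = Module.finrank ℝ (Submodule.span ℝ (Set.range Pmᵀ)) := by
      rw [show Pm.rank = Module.finrank ℝ (LinearMap.range Pm.mulVecLin) from rfl,
        Matrix.range_mulVecLin]
      rfl
    rw [e1, hTranA, hcols, ← hTranP, ← e2, hrank]
  refine ⟨hrank', congrArg (Submodule.span ℝ) hcols, ?_, ?_⟩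
  · -- sv' κ = 0
    by_contra hne
    have hκpn : κ < min p n := by
      by_contra hge
      exact hne (hzero' κ (le_of_not_gt hge))
    have hκp' : κ < p := lt_of_lt_of_le hκpn (min_le_left _ _)
    have hκn : κ < n := lt_of_lt_of_le hκpn (min_le_right _ _)
    have hposκ : 0 < sv' κ := lt_of_le_of_ne (hnn' κ) (Ne.symm hne)
    have hpos : ∀ l : ℕ, l ≤ κ → sv' l ≠ 0 := fun l hl =>
      (lt_of_lt_of_le hposκ (hanti' l κ hl)).ne'
    have hmem : ∀ l : Fin (κ + 1),
        (fun t => U' t ⟨(l : ℕ), by omega⟩) ∈ LinearMap.range A'.mulVecLin := by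
      intro l
      have hlp : (l : ℕ) < p := by omega
      have hln : (l : ℕ) < n := by omega
      refine ⟨fun j => (sv' (l : ℕ))⁻¹ * V' j ⟨(l : ℕ), hln⟩, ?_⟩
      rw [Matrix.mulVecLin_apply]
      have key := svd_col_mem U' V' sv' hV' hlp hln (hpos _ (by omega))
      rw [← hdec'] at key
      exact key
    have honb : ∀ a b : Fin (κ + 1),
        ∑ t, U' t (⟨(a : ℕ), by omega⟩ : Fin p) * U' t (⟨(b : ℕ), by omega⟩ : Fin p)
          = if a = b then 1 else 0 := by
      intro a b
      rw [colOrtho hU']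
      by_cases hab : a = b
      · simp [hab]
      · have : (⟨(a : ℕ), by omega⟩ : Fin p) ≠ ⟨(b : ℕ), by omega⟩ := by
          intro h
          apply hab
          apply Fin.ext
          simpa using congrArg Fin.val h
        simp [hab, this]
    have hli : LinearIndependent ℝ
        (fun l : Fin (κ + 1) => fun t => U' t (⟨(l : ℕ), by omega⟩ : Fin p)) :=
      onb_linIndep honb
    have hspanle : Submodule.span ℝ
        (Set.range fun l : Fin (κ + 1) => fun t => U' t (⟨(l : ℕ), by omega⟩ : Fin p))
          ≤ LinearMap.range A'.mulVecLin := by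
      rw [Submodule.span_le]
      rintro _ ⟨l, rfl⟩
      exact hmem l
    have hfr : Module.finrank ℝ (Submodule.span ℝ
        (Set.range fun l : Fin (κ + 1) => fun t => U' t (⟨(l : ℕ), by omega⟩ : Fin p)))
          = κ + 1 := by
      rw [finrank_span_eq_card hli, Fintype.card_fin]
    have hle : κ + 1 ≤ κ := by
      have := Submodule.finrank_mono hspanle
      rw [hfr] at this
      rwa [show Module.finrank ℝ (LinearMap.range A'.mulVecLin) = κ from hrank'] at this
    omega
  · -- singular value lower bound
    set N : ℝ := ⨅ b, Nf b with hNdef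
    have hNpos : (0 : ℝ) < N := by linarith
    have hcoef : (k : ℝ) / (betaMin (n + 1) k z * ((n : ℝ) + 1)) = 1 / N := by
      have hbb : betaMin (n + 1) k z * ((n : ℝ) + 1) = N * k := (div_eq_iff hk0).mp hbm
      rw [hbb]
      field_simp
    -- subspaces
    set f : Fin p → (Fin p → ℝ) := fun l => fun t => U t l with hf
    set f' : Fin p → (Fin p → ℝ) := fun l => fun t => U' t l with hf'
    set sS : Set (Fin p) := {l : Fin p | (l : ℕ) < κ} with hsS
    set sT : Set (Fin p) := {l : Fin p | κ - 1 ≤ (l : ℕ)} with hsT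
    set S := Submodule.span ℝ (f '' sS) with hS
    set T := Submodule.span ℝ (f' '' sT) with hT
    have hSfr : Module.finrank ℝ S = κ := by
      have hre : Set.range (Fin.castLE hκp) = sS := by
        ext l
        constructor
        · rintro ⟨t, rfl⟩
          exact t.isLt
        · intro hl
          exact ⟨⟨(l : ℕ), hl⟩, Fin.ext rfl⟩
      have : S = Submodule.span ℝ (Set.range (f ∘ Fin.castLE hκp)) := by
        rw [Set.range_comp, hre]
      rw [this]
      have hinj : Function.Injective (Fin.castLE hκp) := fun a b hab => by
        apply Fin.ext; simpa using congrArg Fin.val hab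
      exact onb_finrank_span hU (Fin.castLE hκp) hinj
    have heT : ∀ l : Fin (p - (κ - 1)), κ - 1 + (l : ℕ) < p := fun l => by omega
    set eT : Fin (p - (κ - 1)) → Fin p := fun l => ⟨κ - 1 + (l : ℕ), heT l⟩ with heTdef
    have hTfr : Module.finrank ℝ T = p - (κ - 1) := by
      have hre : Set.range eT = sT := by
        ext l
        constructor
        · rintro ⟨t, rfl⟩
          show κ - 1 ≤ κ - 1 + (t : ℕ)
          omega
        · intro hl
          have hl' : κ - 1 ≤ (l : ℕ) := hl
          refine ⟨⟨(l : ℕ) - (κ - 1), by omega⟩, ?_⟩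
          apply Fin.ext
          show κ - 1 + ((l : ℕ) - (κ - 1)) = (l : ℕ)
          omega
      have : T = Submodule.span ℝ (Set.range (f' ∘ eT)) := by
        rw [Set.range_comp, hre]
      rw [this]
      have hinj : Function.Injective eT := fun a b hab => by
        apply Fin.ext
        have := congrArg Fin.val hab
        simp only [heTdef] at this
        omega
      exact onb_finrank_span hU' eT hinj
    have hsum := Submodule.finrank_sup_add_finrank_inf_eq S T
    have hsup : Module.finrank ℝ ↥(S ⊔ T) ≤ p := by
      have h1 := Submodule.finrank_le (S ⊔ T)
      rwa [Module.finrank_fin_fun] at h1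
    have hinter : 0 < Module.finrank ℝ ↥(S ⊓ T) := by
      rw [hSfr, hTfr] at hsum
      omega
    have hnebot : S ⊓ T ≠ ⊥ := by
      intro h
      rw [h, finrank_bot] at hinter
      omega
    obtain ⟨x, hxST, hx0⟩ := (Submodule.ne_bot_iff _).mp hnebot
    have hxS : x ∈ S := hxST.1
    have hxT : x ∈ T := hxST.2
    -- coefficient vectors
    set cS : Fin p → ℝ := fun l => ∑ t, U t l * x t with hcS
    set cT : Fin p → ℝ := fun l => ∑ t, U' t l * x t with hcT
    have hQP : ∑ j, (∑ a, Pm a j * x a) ^ 2 = ∑ l : Fin p, sv l ^ 2 * cS l ^ 2 :=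
      svd_quadform' U V sv hV hzero Pm hdec x
    have hQA : ∑ j, (∑ a, A' a j * x a) ^ 2 = ∑ l : Fin p, sv' l ^ 2 * cT l ^ 2 :=
      svd_quadform' U' V' sv' hV' hzero' A' hdec' x
    have hnx : 0 < ∑ t, x t ^ 2 := by
      have hex : ∃ t, x t ≠ 0 := by
        by_contra h
        push_neg at h
        exact hx0 (funext h)
      obtain ⟨t0, ht0⟩ := hex
      exact Finset.sum_pos' (fun t _ => sq_nonneg _)
        ⟨t0, Finset.mem_univ _, by positivity⟩
    have hnormS : ∑ l : Fin p, cS l ^ 2 = ∑ t, x t ^ 2 := onb_norm hU x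
    have hnormT : ∑ l : Fin p, cT l ^ 2 = ∑ t, x t ^ 2 := onb_norm hU' x
    have hsuppS : ∀ l : Fin p, ¬((l : ℕ) < κ) → cS l = 0 := fun l hl =>
      span_support hU sS x hxS l (by simpa [hsS] using hl)
    have hsuppT : ∀ l : Fin p, ¬(κ - 1 ≤ (l : ℕ)) → cT l = 0 := fun l hl =>
      span_support hU' sT x hxT l (by simpa [hsT] using hl)
    have hlow : sv (κ - 1) ^ 2 * ∑ t, x t ^ 2 ≤ ∑ l : Fin p, sv l ^ 2 * cS l ^ 2 := by
      rw [← hnormS, Finset.mul_sum]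
      apply Finset.sum_le_sum
      intro l _
      by_cases hl : (l : ℕ) < κ
      · have h1 : sv (κ - 1) ≤ sv (l : ℕ) := hanti _ _ (by omega)
        exact mul_le_mul_of_nonneg_right
          (pow_le_pow_left₀ (hnn _) h1 2) (sq_nonneg _)
      · rw [hsuppS l hl]
        simp
    have hup : ∑ l : Fin p, sv' l ^ 2 * cT l ^ 2 ≤ sv' (κ - 1) ^ 2 * ∑ t, x t ^ 2 := by
      rw [← hnormT, Finset.mul_sum]
      apply Finset.sum_le_sum
      intro l _
      by_cases hl : κ - 1 ≤ (l : ℕ)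
      · have h1 : sv' (l : ℕ) ≤ sv' (κ - 1) := hanti' _ _ hl
        exact mul_le_mul_of_nonneg_right
          (pow_le_pow_left₀ (hnn' _) h1 2) (sq_nonneg _)
      · rw [hsuppT l hl]
        simp
    -- drop one column
    set g : ℝ := (∑ a, Pm a i * x a) ^ 2 with hgdef
    have hsplit : ∑ j, (∑ a, Pm a j * x a) ^ 2
        = g + ∑ t : Fin n, (∑ a, A' a t * x a) ^ 2 := by
      rw [Fin.sum_univ_succAbove (fun j => (∑ a, Pm a j * x a) ^ 2) i]
      rfl
    have hgQ : N * g ≤ ∑ j, (∑ a, Pm a j * x a) ^ 2 := by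
      have hterm : ∀ j ∈ Finset.univ.filter (fun t => z t = z i),
          (∑ a, Pm a j * x a) ^ 2 = g := by
        intro j hj
        have hzj : z j = z i := (Finset.mem_filter.mp hj).2
        rw [hgdef]
        congr 1
        apply Finset.sum_congr rfl
        intro a _
        rw [hP, hP, hzj]
      have hfil : ∑ j ∈ Finset.univ.filter (fun t => z t = z i),
          (∑ a, Pm a j * x a) ^ 2
          = (((Finset.univ.filter (fun t => z t = z i)).card : ℕ) : ℝ) * g := by
        rw [Finset.sum_congr rfl hterm, Finset.sum_const, nsmul_eq_mul]
      have hcard : N ≤ (((Finset.univ.filter (fun t => z t = z i)).card : ℕ) : ℝ) := by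
        have h := hNmin (z i)
        rw [hNf] at h
        simpa using h
      calc N * g ≤ (((Finset.univ.filter (fun t => z t = z i)).card : ℕ) : ℝ) * g :=
            mul_le_mul_of_nonneg_right hcard (by rw [hgdef]; exact sq_nonneg _)
        _ = ∑ j ∈ Finset.univ.filter (fun t => z t = z i), (∑ a, Pm a j * x a) ^ 2 :=
            hfil.symm
        _ ≤ ∑ j, (∑ a, Pm a j * x a) ^ 2 :=
            Finset.sum_le_sum_of_subset_of_nonneg (Finset.subset_univ _)
              (fun _ _ _ => sq_nonneg _)
    have hone : 1 / N ≤ 1 := by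
      rw [div_le_one hNpos]; linarith
    have hQAbound : (1 - 1 / N) * ∑ j, (∑ a, Pm a j * x a) ^ 2
        ≤ ∑ t : Fin n, (∑ a, A' a t * x a) ^ 2 := by
      have hgle : g ≤ (1 / N) * ∑ j, (∑ a, Pm a j * x a) ^ 2 := by
        rw [div_mul_eq_mul_div, le_div_iff₀ hNpos]
        linarith [hgQ]
      have expand : (1 - 1 / N) * ∑ j, (∑ a, Pm a j * x a) ^ 2
          = (∑ j, (∑ a, Pm a j * x a) ^ 2)
            - (1 / N) * ∑ j, (∑ a, Pm a j * x a) ^ 2 := by ring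
      rw [expand]
      linarith [hsplit, hgle]
    -- combine
    have hchain : ((1 - 1 / N) * sv (κ - 1) ^ 2) * (∑ t, x t ^ 2)
        ≤ sv' (κ - 1) ^ 2 * (∑ t, x t ^ 2) := by
      have c1 : (1 - 1 / N) * (sv (κ - 1) ^ 2 * ∑ t, x t ^ 2)
          ≤ (1 - 1 / N) * ∑ j, (∑ a, Pm a j * x a) ^ 2 := by
        apply mul_le_mul_of_nonneg_left _ (by linarith)
        rw [hQP]
        exact hlow
      calc ((1 - 1 / N) * sv (κ - 1) ^ 2) * (∑ t, x t ^ 2)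
          = (1 - 1 / N) * (sv (κ - 1) ^ 2 * ∑ t, x t ^ 2) := by ring
        _ ≤ (1 - 1 / N) * ∑ j, (∑ a, Pm a j * x a) ^ 2 := c1
        _ ≤ ∑ t : Fin n, (∑ a, A' a t * x a) ^ 2 := hQAbound
        _ = ∑ l : Fin p, sv' l ^ 2 * cT l ^ 2 := hQA
        _ ≤ sv' (κ - 1) ^ 2 * ∑ t, x t ^ 2 := hup
    have hfinal : (1 - 1 / N) * sv (κ - 1) ^ 2 ≤ sv' (κ - 1) ^ 2 :=
      le_of_mul_le_mul_right hchain hnx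
    rw [hcoef]
    exact hfinal
end
end
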